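/- arXiv:1105.1662 — 8 statements merged into one kernel-verified Lean document; each statement's English description precedes it below -/
import Mathlib

section
/- A sequence of σ-algebras A^n (sub-σ-algebras of H on a probability space) converges weakly to a σ-algebra A (i.e., for all B in A, E(1_B | A^n) → 1_B in probability) if and only if for every integrable A-measurable random variable Z, E(Z | A^n) converges in probability to Z. -/
open MeasureTheory Filter
open scoped ENNReal

lemma tim_add {Ω : Type*} {H : MeasurableSpace Ω} {μ : Measure Ω}
    {f g : ℕ → Ω → ℝ} {F G : Ω → ℝ}
    (hf : TendstoInMeasure μ f atTop F) (hg : TendstoInMeasure μ g atTop G) :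
    TendstoInMeasure μ (fun n => f n + g n) atTop (F + G) := by
  rw [tendstoInMeasure_iff_dist] at hf hg ⊢
  intro ε hε
  have hsub : ∀ n, μ {x | ε ≤ dist ((f n + g n) x) ((F + G) x)}
      ≤ μ {x | ε/2 ≤ dist (f n x) (F x)} + μ {x | ε/2 ≤ dist (g n x) (G x)} := by
    intro n
    refine le_trans (measure_mono ?_) (measure_union_le _ _)
    intro x hx
    by_contra hc
    simp only [Set.mem_union, not_or] at hc
    simp only [Set.mem_union, Set.mem_setOf_eq, not_or, not_le] at hc
    simp only [Set.mem_setOf_eq, Pi.add_apply, Real.dist_eq] at hx hc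
    have : |f n x + g n x - (F x + G x)| ≤ |f n x - F x| + |g n x - G x| := by
      have := abs_add_le (f n x - F x) (g n x - G x)
      rw [show f n x + g n x - (F x + G x) = f n x - F x + (g n x - G x) by ring]; exact this
    linarith
  have h0 : Tendsto (fun n => μ {x | ε/2 ≤ dist (f n x) (F x)} + μ {x | ε/2 ≤ dist (g n x) (G x)})
      atTop (nhds 0) := by
    have := (hf (ε/2) (by linarith)).add (hg (ε/2) (by linarith))
    simpa using this
  exact tendsto_of_tendsto_of_tendsto_of_le_of_le tendsto_const_nhds h0
    (fun n => zero_le) hsub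

lemma tim_smul {Ω : Type*} {H : MeasurableSpace Ω} {μ : Measure Ω}
    {f : ℕ → Ω → ℝ} {F : Ω → ℝ} (c : ℝ)
    (hf : TendstoInMeasure μ f atTop F) :
    TendstoInMeasure μ (fun n => c • f n) atTop (c • F) := by
  rw [tendstoInMeasure_iff_dist] at hf ⊢
  rcases eq_or_ne c 0 with rfl | hc
  · intro ε hε
    simpa [hε.not_ge] using (tendsto_const_nhds : Tendsto (fun _ : ℕ => (0:ℝ≥0∞)) atTop (nhds 0))
  · intro ε hε
    have habs : 0 < |c| := abs_pos.mpr hc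
    have : ∀ n, {x | ε ≤ dist ((c • f n) x) ((c • F) x)} = {x | ε/|c| ≤ dist (f n x) (F x)} := by
      intro n
      ext x
      simp only [Set.mem_setOf_eq, Pi.smul_apply, Real.dist_eq, smul_eq_mul]
      rw [show c * f n x - c * F x = c * (f n x - F x) by ring, abs_mul,
        div_le_iff₀' habs]
    simp only [this]
    exact hf _ (by positivity)

lemma markov_abs {Ω : Type*} {H : MeasurableSpace Ω} {μ : Measure Ω}
    {h : Ω → ℝ} (hm : AEStronglyMeasurable h μ) {ε : ℝ} (hε : 0 < ε) :
    μ {x | ε ≤ |h x|} ≤ eLpNorm h 1 μ / ENNReal.ofReal ε := by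
  have hset : {x | ε ≤ |h x|} = {x | ENNReal.ofReal ε ≤ ‖h x‖ₑ} := by
    ext x
    simp only [Set.mem_setOf_eq]
    rw [← ofReal_norm_eq_enorm, Real.norm_eq_abs,
      ENNReal.ofReal_le_ofReal_iff (abs_nonneg _)]
  rw [hset, eLpNorm_one_eq_lintegral_enorm]
  exact meas_ge_le_lintegral_div hm.enorm (by simp [hε]) (by simp)

lemma tim_approx {Ω : Type*} {H : MeasurableSpace Ω} (μ : Measure Ω) [IsProbabilityMeasure μ]
    (A : ℕ → MeasurableSpace Ω) (hA : ∀ n, A n ≤ H) {Z : Ω → ℝ} (hZ : Integrable Z μ)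
    (happ : ∀ δ : ℝ≥0∞, δ ≠ 0 → ∃ g : Ω → ℝ, Integrable g μ ∧
      TendstoInMeasure μ (fun n => μ[g|A n]) atTop g ∧ eLpNorm (Z - g) 1 μ ≤ δ) :
    TendstoInMeasure μ (fun n => μ[Z|A n]) atTop Z := by
  rw [tendstoInMeasure_iff_dist]
  intro ε hε
  rw [ENNReal.tendsto_atTop_zero]
  intro η hη
  set η' : ℝ≥0∞ := min η 1 with hη'def
  have hη'0 : η' ≠ 0 := (lt_min hη zero_lt_one).ne'
  have hε3 : (0:ℝ) < ε/3 := by linarith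
  have hofR : ENNReal.ofReal (ε/3) ≠ 0 := by simp [hε3]
  set δ : ℝ≥0∞ := η'/3 * ENNReal.ofReal (ε/3) with hδdef
  have hδ0 : δ ≠ 0 := by
    apply mul_ne_zero _ hofR
    exact (ENNReal.div_pos hη'0 (by norm_num)).ne'
  obtain ⟨g, hgint, hgtim, hgnorm⟩ := happ δ hδ0
  have hkey : δ / ENNReal.ofReal (ε/3) ≤ η'/3 := by
    rw [ENNReal.div_le_iff hofR (by simp), hδdef, mul_comm]
  -- term 3
  have hT3 : μ {x | ε/3 ≤ |Z x - g x|} ≤ η'/3 := by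
    have h1 : μ {x | ε/3 ≤ |(Z - g) x|} ≤ eLpNorm (Z - g) 1 μ / ENNReal.ofReal (ε/3) :=
      markov_abs (hZ.sub hgint).aestronglyMeasurable hε3
    refine le_trans (le_trans (le_of_eq ?_) h1)
      (le_trans (ENNReal.div_le_div_right hgnorm _) hkey)
    congr 1
  -- term 1
  have hT1 : ∀ n, μ {x | ε/3 ≤ |(μ[Z - g|A n]) x|} ≤ η'/3 := by
    intro n
    have h1 : μ {x | ε/3 ≤ |(μ[Z - g|A n]) x|}
        ≤ eLpNorm (μ[Z - g|A n]) 1 μ / ENNReal.ofReal (ε/3) :=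
      markov_abs (stronglyMeasurable_condExp.mono (hA n)).aestronglyMeasurable hε3
    refine le_trans h1 (le_trans (ENNReal.div_le_div_right ?_ _) hkey)
    exact le_trans (eLpNorm_one_condExp_le_eLpNorm _) hgnorm
  -- term 2
  have hη'3pos : (0:ℝ≥0∞) < η'/3 := ENNReal.div_pos hη'0 (by norm_num)
  obtain ⟨N, hN⟩ := (ENNReal.tendsto_atTop_zero.mp (tendstoInMeasure_iff_dist.mp hgtim (ε/3) hε3)) (η'/3) hη'3pos
  refine ⟨N, fun n hn => ?_⟩
  have hsub : μ {x | ε ≤ dist ((μ[Z|A n]) x) (Z x)}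
      ≤ μ ({x | ε/3 ≤ |(μ[Z - g|A n]) x|} ∪ {x | ε/3 ≤ dist ((μ[g|A n]) x) (g x)}
          ∪ {x | ε/3 ≤ |Z x - g x|}) := by
    apply measure_mono_ae
    filter_upwards [condExp_sub hZ hgint (m := A n)] with x hx hxmem
    show x ∈ ({x | ε/3 ≤ |(μ[Z - g|A n]) x|} ∪ {x | ε/3 ≤ dist ((μ[g|A n]) x) (g x)}
        ∪ {x | ε/3 ≤ |Z x - g x|})
    simp only [Set.mem_union, Set.mem_setOf_eq]
    by_contra hc
    push_neg at hc
    obtain ⟨⟨h1, h2⟩, h3⟩ := hc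
    simp only [Set.mem_setOf_eq, Real.dist_eq] at hxmem h2
    have hxmem' : ε ≤ |(μ[Z|A n]) x - Z x| := hxmem
    have hxeq : (μ[Z - g|A n]) x = (μ[Z|A n]) x - (μ[g|A n]) x := by
      exact hx
    have htri : |(μ[Z|A n]) x - Z x|
        ≤ |(μ[Z - g|A n]) x| + |(μ[g|A n]) x - g x| + |Z x - g x| := by
      rw [hxeq]
      have e1 : (μ[Z|A n]) x - Z x
          = ((μ[Z|A n]) x - (μ[g|A n]) x) + ((μ[g|A n]) x - g x) + (g x - Z x) := by ring
      rw [e1]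
      refine le_trans (abs_add_le _ _) (add_le_add (abs_add_le _ _) ?_)
      rw [abs_sub_comm]
    linarith
  refine le_trans hsub (le_trans (le_trans (measure_union_le _ _)
    (add_le_add (measure_union_le _ _) le_rfl)) ?_)
  calc μ {x | ε/3 ≤ |(μ[Z - g|A n]) x|} + μ {x | ε/3 ≤ dist ((μ[g|A n]) x) (g x)}
        + μ {x | ε/3 ≤ |Z x - g x|}
      ≤ η'/3 + η'/3 + η'/3 := add_le_add (add_le_add (hT1 n) (hN n hn)) hT3
    _ = η' := ENNReal.add_thirds _
    _ ≤ η := min_le_left _ _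

lemma indicator_one_integrable {Ω : Type*} {H : MeasurableSpace Ω} (μ : Measure Ω)
    [IsProbabilityMeasure μ] {B : Set Ω} (hB : MeasurableSet[H] B) :
    Integrable (Set.indicator B fun _ => (1:ℝ)) μ :=
  (integrable_const (1:ℝ)).indicator hB


/-- Weak convergence of a sequence of sub-σ-algebras `A n` to a σ-algebra `Alim`:
for every `B ∈ Alim`, the conditional expectations `E(1_B | A n)` converge in probability
(in measure) to `1_B`. -/
def WeakConvSigma {Ω : Type*} {mΩ : MeasurableSpace Ω} (μ : Measure Ω)
    (A : ℕ → MeasurableSpace Ω) (Alim : MeasurableSpace Ω) : Prop :=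
  ∀ B : Set Ω, MeasurableSet[Alim] B →
    TendstoInMeasure μ
      (fun n => μ[Set.indicator B (fun _ => (1 : ℝ)) | A n]) atTop
      (Set.indicator B (fun _ => (1 : ℝ)))

/-- A sequence of σ-algebras `A n` converges weakly to `Alim` if and only if for every
integrable `Alim`-measurable random variable `Z`, `E(Z | A n) → Z` in probability. -/
theorem weakConvSigma_iff_condexp_tendsto
    {Ω : Type*} {H : MeasurableSpace Ω} (μ : Measure Ω) [IsProbabilityMeasure μ]
    (A : ℕ → MeasurableSpace Ω) (Alim : MeasurableSpace Ω)
    (hA : ∀ n, A n ≤ H) (hAlim : Alim ≤ H) :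
    WeakConvSigma μ A Alim ↔
      ∀ Z : Ω → ℝ, @Integrable ℝ _ _ Ω H Z μ → StronglyMeasurable[Alim] Z →
        TendstoInMeasure μ (fun n => μ[Z | A n]) atTop Z := by
  constructor
  · intro h Z hZint hZsm
    -- integrability of Alim-simple functions
    have hsint : ∀ g : @SimpleFunc Ω Alim ℝ, Integrable (⇑g) μ := by
      intro g
      obtain ⟨C, hC⟩ := g.exists_forall_norm_le
      exact Integrable.mono' (integrable_const C)
        ((g.stronglyMeasurable.mono hAlim).aestronglyMeasurable) (ae_of_all _ hC)
    -- convergence for Alim-simple functions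
    have hsimple : ∀ g : @SimpleFunc Ω Alim ℝ,
        TendstoInMeasure μ (fun n => μ[⇑g|A n]) atTop ⇑g := by
      intro g
      refine SimpleFunc.induction (motive := fun g : @SimpleFunc Ω Alim ℝ =>
        TendstoInMeasure μ (fun n => μ[⇑g|A n]) atTop ⇑g) ?_ ?_ g
      · intro c s hs
        have hcoe : ⇑(SimpleFunc.piecewise s hs (SimpleFunc.const Ω c)
            (SimpleFunc.const Ω (0:ℝ))) = c • Set.indicator s (fun _ => (1:ℝ)) := by
          funext x
          by_cases hx : x ∈ s <;>
            simp [SimpleFunc.piecewise_apply, hx, Set.indicator]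
        rw [hcoe]
        have := tim_smul (μ := μ) c (h s hs)
        refine this.congr (fun n => ?_) EventuallyEq.rfl
        exact (condExp_smul c (Set.indicator s fun _ => (1:ℝ)) (A n)).symm
      · intro f g _ hf hg
        have hadd := tim_add (μ := μ) hf hg
        have : TendstoInMeasure μ (fun n => μ[⇑f + ⇑g|A n]) atTop (⇑f + ⇑g) := by
          refine hadd.congr (fun n => ?_) EventuallyEq.rfl
          exact (condExp_add (hsint f) (hsint g) (A n)).symm
        simpa [SimpleFunc.coe_add] using this
    -- approximation
    refine tim_approx μ A hA hZint ?_
    intro δ hδ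
    have hZmem : MemLp Z 1 (μ.trim hAlim) :=
      memLp_one_iff_integrable.mpr (hZint.trim hAlim hZsm)
    obtain ⟨g, hg, -⟩ := hZmem.exists_simpleFunc_eLpNorm_sub_lt (by simp) hδ
    refine ⟨⇑g, hsint g, hsimple g, ?_⟩
    rw [← eLpNorm_trim hAlim (hZsm.sub g.stronglyMeasurable)]
    exact hg.le
  · intro h B hB
    have hBH : MeasurableSet[H] B := hAlim B hB
    have hint : @Integrable ℝ _ _ Ω H (Set.indicator B (fun _ => (1:ℝ))) μ :=
      indicator_one_integrable μ hBH
    have hsm : StronglyMeasurable[Alim] (Set.indicator B (fun _ => (1:ℝ))) :=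
      stronglyMeasurable_const.indicator hB
    exact h _ hint hsm
end

section
/- Let X be a càdlàg process on [0,T], A = σ(X_t : 0 ≤ t ≤ T), and (A^n) a sequence of sub-σ-algebras. Then A^n converges weakly to A if and only if for every k ∈ ℕ, every finite collection of times t_1,...,t_k in a dense subset D of [0,T] containing T, and every bounded continuous function f : ℝ^k → ℝ, the conditional expectations E(f(X_{t_1},...,X_{t_k}) | A^n) converge in probability to f(X_{t_1},...,X_{t_k}). -/
open MeasureTheory Filter

/-- A function is càdlàg on `[0,T]`: right-continuous on `[0,T)` and with left limits
on `(0,T]`. -/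
def IsCadlagOn (T : ℝ) (f : ℝ → ℝ) : Prop :=
  (∀ t ∈ Set.Ico 0 T, Filter.Tendsto f (nhdsWithin t (Set.Ioi t)) (nhds (f t))) ∧
  (∀ t ∈ Set.Ioc 0 T, ∃ l : ℝ, Filter.Tendsto f (nhdsWithin t (Set.Iio t)) (nhds l))

open scoped ENNReal NNReal Topology

section AuxHelpers

variable {Ω : Type*} {H : MeasurableSpace Ω} {μ : Measure Ω} [IsProbabilityMeasure μ]
  {A : ℕ → MeasurableSpace Ω}





/-- generic: convergence in measure is preserved by pointwise addition. -/
theorem tendstoInMeasure_add' {F G : ℕ → Ω → ℝ} {f g : Ω → ℝ}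
    (hF : TendstoInMeasure μ F atTop f) (hG : TendstoInMeasure μ G atTop g) :
    TendstoInMeasure μ (fun n x => F n x + G n x) atTop (fun x => f x + g x) := by
  rw [tendstoInMeasure_iff_dist]; intro ε hε
  have h2 : (0:ℝ) < ε / 2 := by linarith
  have key : ∀ n, μ {x | ε ≤ dist (F n x + G n x) (f x + g x)} ≤
      μ {x | ε / 2 ≤ dist (F n x) (f x)} + μ {x | ε / 2 ≤ dist (G n x) (g x)} := by
    intro n
    refine le_trans (measure_mono ?_) (measure_union_le _ _)
    intro x hx
    by_contra hc
    try push_neg at hc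
    simp only [Set.mem_union, Set.mem_setOf_eq, not_or, not_le] at hc
    have := dist_add_add_le (F n x) (G n x) (f x) (g x)
    simp only [Set.mem_setOf_eq] at hx
    linarith [hc.1, hc.2]
  have := (tendstoInMeasure_iff_dist.mp hF (ε/2) h2).add (tendstoInMeasure_iff_dist.mp hG (ε/2) h2)
  rw [add_zero] at this
  exact tendsto_of_tendsto_of_tendsto_of_le_of_le tendsto_const_nhds this
    (fun n => zero_le) key

theorem tendstoInMeasure_sub' {F G : ℕ → Ω → ℝ} {f g : Ω → ℝ}
    (hF : TendstoInMeasure μ F atTop f) (hG : TendstoInMeasure μ G atTop g) :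
    TendstoInMeasure μ (fun n x => F n x - G n x) atTop (fun x => f x - g x) := by
  rw [tendstoInMeasure_iff_dist]; intro ε hε
  have h2 : (0:ℝ) < ε / 2 := by linarith
  have key : ∀ n, μ {x | ε ≤ dist (F n x - G n x) (f x - g x)} ≤
      μ {x | ε / 2 ≤ dist (F n x) (f x)} + μ {x | ε / 2 ≤ dist (G n x) (g x)} := by
    intro n
    refine le_trans (measure_mono ?_) (measure_union_le _ _)
    intro x hx
    by_contra hc
    try push_neg at hc
    simp only [Set.mem_union, Set.mem_setOf_eq, not_or, not_le] at hc
    have := dist_sub_sub_le (F n x) (G n x) (f x) (g x)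
    simp only [Set.mem_setOf_eq] at hx
    linarith [hc.1, hc.2]
  have := (tendstoInMeasure_iff_dist.mp hF (ε/2) h2).add (tendstoInMeasure_iff_dist.mp hG (ε/2) h2)
  rw [add_zero] at this
  exact tendsto_of_tendsto_of_tendsto_of_le_of_le tendsto_const_nhds this
    (fun n => zero_le) key

theorem tendstoInMeasure_const_mul {F : ℕ → Ω → ℝ} {f : Ω → ℝ} (c : ℝ)
    (hF : TendstoInMeasure μ F atTop f) :
    TendstoInMeasure μ (fun n x => c * F n x) atTop (fun x => c * f x) := by
  rcases eq_or_ne c 0 with rfl | hc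
  · rw [tendstoInMeasure_iff_dist]; intro ε hε
    have h0 : ∀ n : ℕ, {x | ε ≤ dist ((0:ℝ) * F n x) (0 * f x)} = (∅ : Set Ω) := by
      intro n; ext x; simp [hε.not_ge, dist_self]
    simp only [h0, measure_empty]
    exact tendsto_const_nhds
  · rw [tendstoInMeasure_iff_dist]; intro ε hε
    have hc' : 0 < |c| := abs_pos.mpr hc
    have h2 : (0:ℝ) < ε / |c| := by positivity
    have key : ∀ n, {x | ε ≤ dist (c * F n x) (c * f x)} = {x | ε / |c| ≤ dist (F n x) (f x)} := by
      intro n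
      ext x
      simp only [Set.mem_setOf_eq, dist_eq_norm, ← mul_sub, norm_mul, Real.norm_eq_abs]
      rw [div_le_iff₀' hc']
    simpa only [key] using tendstoInMeasure_iff_dist.mp hF (ε / |c|) h2

theorem tendstoInMeasure_self (g : Ω → ℝ) :
    TendstoInMeasure μ (fun _ : ℕ => g) atTop g := by
  rw [tendstoInMeasure_iff_dist]; intro ε hε
  have h0 : {x | ε ≤ dist (g x) (g x)} = (∅ : Set Ω) := by
    ext x; simp [hε.not_ge, dist_self]
  simp only [h0, measure_empty]
  exact tendsto_const_nhds

/-- Markov-type bound. -/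
theorem meas_dist_ge_le {u v : Ω → ℝ} (hu : AEStronglyMeasurable (fun x => u x - v x) μ)
    {a : ℝ} (ha : 0 < a) :
    μ {x | a ≤ dist (u x) (v x)} ≤
      (ENNReal.ofReal a)⁻¹ * eLpNorm (fun x => u x - v x) 1 μ := by
  have hset : {x | a ≤ dist (u x) (v x)} =
      {x | ENNReal.ofReal a ≤ (‖u x - v x‖₊ : ℝ≥0∞)} := by
    ext x
    simp only [Set.mem_setOf_eq, dist_eq_norm, ← enorm_eq_nnnorm, ← ofReal_norm]
    rw [ENNReal.ofReal_le_ofReal_iff (norm_nonneg _)]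
  have := meas_ge_le_mul_pow_eLpNorm_enorm μ one_ne_zero ENNReal.one_ne_top hu
    (ε := ENNReal.ofReal a) (by simpa using ha) (by simp)
  rw [hset]; simp only [ENNReal.toReal_one, ENNReal.rpow_one] at this; exact this



/-- Closure of the "conditional expectations converge in probability" property under
`L¹` approximation. -/
theorem cc_of_approx {g : Ω → ℝ} (hg : Integrable g μ)
    (happ : ∀ η : ℝ≥0∞, η ≠ 0 → ∃ h : Ω → ℝ, Integrable h μ ∧
      TendstoInMeasure μ (fun n => μ[h | A n]) atTop h ∧
      eLpNorm (fun x => g x - h x) 1 μ ≤ η) :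
    TendstoInMeasure μ (fun n => μ[g | A n]) atTop g := by
  rw [tendstoInMeasure_iff_dist]; intro ε hε
  rw [ENNReal.tendsto_atTop_zero]
  intro δ hδ
  set δ' := min δ 1 with hδ'def
  have hδ'0 : δ' ≠ 0 := by
    simp only [hδ'def, ne_eq, min_eq_iff]
    rintro (⟨h, -⟩ | ⟨h, -⟩) <;> simp_all [hδ.ne']
  have hε3 : (0:ℝ) < ε / 3 := by linarith
  have hofReal : ENNReal.ofReal (ε/3) ≠ 0 := by simp [hε3]
  have hofRealtop : ENNReal.ofReal (ε/3) ≠ ∞ := ENNReal.ofReal_ne_top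
  obtain ⟨h, hhi, hhcc, hap⟩ := happ (ENNReal.ofReal (ε/3) * (δ'/4))
    (by
      refine mul_ne_zero hofReal ?_
      simp only [ne_eq, ENNReal.div_eq_zero_iff]
      push_neg
      exact ⟨hδ'0, by norm_num⟩)
  obtain ⟨N, hN⟩ := ENNReal.tendsto_atTop_zero.mp (tendstoInMeasure_iff_dist.mp hhcc (ε/3) hε3) (δ'/2)
    (by
      simp only [gt_iff_lt, pos_iff_ne_zero, ne_eq, ENNReal.div_eq_zero_iff]
      push_neg
      exact ⟨hδ'0, by norm_num⟩)
  refine ⟨N, fun n hn => ?_⟩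
  have hsub : {x | ε ≤ dist (condExp (A n) μ g x) (g x)} ⊆
      {x | ε/3 ≤ dist (condExp (A n) μ g x) (condExp (A n) μ h x)} ∪
      ({x | ε/3 ≤ dist (condExp (A n) μ h x) (h x)} ∪ {x | ε/3 ≤ dist (h x) (g x)}) := by
    intro x hx
    by_contra hc
    try push_neg at hc
    simp only [Set.mem_union, Set.mem_setOf_eq, not_or, not_le] at hc
    have := dist_triangle4 (condExp (A n) μ g x) (condExp (A n) μ h x) (h x) (g x)
    simp only [Set.mem_setOf_eq] at hx
    linarith [hc.1, hc.2.1, hc.2.2]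
  have hT1 : μ {x | ε/3 ≤ dist (condExp (A n) μ g x) (condExp (A n) μ h x)} ≤ δ'/4 := by
    have hms : AEStronglyMeasurable (fun x => condExp (A n) μ g x - condExp (A n) μ h x) μ :=
      (integrable_condExp.sub integrable_condExp).aestronglyMeasurable
    have heq : eLpNorm (fun x => condExp (A n) μ g x - condExp (A n) μ h x) 1 μ
        = eLpNorm (μ[g - h|A n]) 1 μ := by
      refine eLpNorm_congr_ae ?_
      filter_upwards [condExp_sub hg hhi (m := A n)] with x hx
      simpa using hx.symm
    calc μ {x | ε/3 ≤ dist (condExp (A n) μ g x) (condExp (A n) μ h x)}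
        ≤ (ENNReal.ofReal (ε/3))⁻¹ *
          eLpNorm (fun x => condExp (A n) μ g x - condExp (A n) μ h x) 1 μ :=
          meas_dist_ge_le hms hε3
      _ = (ENNReal.ofReal (ε/3))⁻¹ * eLpNorm (μ[g - h|A n]) 1 μ := by rw [heq]
      _ ≤ (ENNReal.ofReal (ε/3))⁻¹ * eLpNorm (g - h) 1 μ :=
          mul_le_mul_right (eLpNorm_one_condExp_le_eLpNorm _) _
      _ ≤ (ENNReal.ofReal (ε/3))⁻¹ * (ENNReal.ofReal (ε/3) * (δ'/4)) :=
          mul_le_mul_right hap _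
      _ = δ'/4 := by rw [← mul_assoc, ENNReal.inv_mul_cancel hofReal hofRealtop, one_mul]
  have hT3 : μ {x | ε/3 ≤ dist (h x) (g x)} ≤ δ'/4 := by
    have hms : AEStronglyMeasurable (fun x => h x - g x) μ :=
      (hhi.sub hg).aestronglyMeasurable
    refine le_trans (meas_dist_ge_le hms hε3) ?_
    have heq : eLpNorm (fun x => h x - g x) 1 μ = eLpNorm (fun x => g x - h x) 1 μ := by
      rw [← eLpNorm_neg]
      congr 1
      funext x
      simp [neg_sub]
    rw [heq]
    refine le_trans (mul_le_mul_right hap _) ?_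
    rw [← mul_assoc, ENNReal.inv_mul_cancel hofReal hofRealtop, one_mul]
  have hT2 : μ {x | ε/3 ≤ dist (condExp (A n) μ h x) (h x)} ≤ δ'/2 := hN n hn
  calc μ {x | ε ≤ dist (condExp (A n) μ g x) (g x)}
      ≤ μ ({x | ε/3 ≤ dist (condExp (A n) μ g x) (condExp (A n) μ h x)} ∪
        ({x | ε/3 ≤ dist (condExp (A n) μ h x) (h x)} ∪ {x | ε/3 ≤ dist (h x) (g x)})) :=
        measure_mono hsub
    _ ≤ μ {x | ε/3 ≤ dist (condExp (A n) μ g x) (condExp (A n) μ h x)} +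
        (μ {x | ε/3 ≤ dist (condExp (A n) μ h x) (h x)} + μ {x | ε/3 ≤ dist (h x) (g x)}) :=
        le_trans (measure_union_le _ _) (by gcongr; exact measure_union_le _ _)
    _ ≤ δ'/4 + (δ'/2 + δ'/4) := by gcongr
    _ = δ' := by
        rw [show δ'/4 + (δ'/2 + δ'/4) = (δ'/4 + δ'/4) + δ'/2 by ring,
          ENNReal.div_add_div_same, show δ' + δ' = 2 * δ' by ring,
          show (4:ℝ≥0∞) = 2*2 by norm_num,
          ENNReal.mul_div_mul_left _ _ two_ne_zero ENNReal.ofNat_ne_top,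
          ENNReal.add_halves]
    _ ≤ δ := min_le_left _ _



/-- CC is preserved by addition. -/
theorem cc_add {f g : Ω → ℝ} (hfi : Integrable f μ) (hgi : Integrable g μ)
    (hf : TendstoInMeasure μ (fun n => μ[f | A n]) atTop f)
    (hg : TendstoInMeasure μ (fun n => μ[g | A n]) atTop g) :
    TendstoInMeasure μ (fun n => μ[fun x => f x + g x | A n]) atTop (fun x => f x + g x) := by
  refine TendstoInMeasure.congr' (f := fun n x => condExp (A n) μ f x + condExp (A n) μ g x)
    (Eventually.of_forall fun n => ?_) (EventuallyEq.refl _ _) (tendstoInMeasure_add' hf hg)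
  have := (condExp_add hfi hgi (m := A n)).symm
  filter_upwards [this] with x hx
  simpa [Pi.add_def] using hx

theorem cc_sub {f g : Ω → ℝ} (hfi : Integrable f μ) (hgi : Integrable g μ)
    (hf : TendstoInMeasure μ (fun n => μ[f | A n]) atTop f)
    (hg : TendstoInMeasure μ (fun n => μ[g | A n]) atTop g) :
    TendstoInMeasure μ (fun n => μ[fun x => f x - g x | A n]) atTop (fun x => f x - g x) := by
  refine TendstoInMeasure.congr' (f := fun n x => condExp (A n) μ f x - condExp (A n) μ g x)
    (Eventually.of_forall fun n => ?_) (EventuallyEq.refl _ _) (tendstoInMeasure_sub' hf hg)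
  have := (condExp_sub hfi hgi (m := A n)).symm
  filter_upwards [this] with x hx
  simpa [Pi.sub_def] using hx

theorem cc_const_mul {f : Ω → ℝ} (c : ℝ)
    (hf : TendstoInMeasure μ (fun n => μ[f | A n]) atTop f) :
    TendstoInMeasure μ (fun n => μ[fun x => c * f x | A n]) atTop (fun x => c * f x) := by
  refine TendstoInMeasure.congr' (f := fun n x => c * condExp (A n) μ f x)
    (Eventually.of_forall fun n => ?_) (EventuallyEq.refl _ _) (tendstoInMeasure_const_mul c hf)
  have := (condExp_smul (𝕜 := ℝ) (μ := μ) c f (m := A n)).symm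
  filter_upwards [this] with x hx
  simpa [smul_eq_mul, Pi.smul_def] using hx

theorem cc_zero :
    TendstoInMeasure μ (fun n => μ[(fun _ => (0:ℝ)) | A n]) atTop (fun _ => (0:ℝ)) := by
  rw [tendstoInMeasure_iff_dist]; intro ε hε
  have h0 : ∀ n : ℕ, {x | ε ≤ dist (condExp (A n) μ (fun _ => (0:ℝ)) x) ((0:ℝ))} = (∅ : Set Ω) := by
    intro n
    have : condExp (A n) μ (fun _ => (0:ℝ)) = 0 := by
      rw [show (fun _ : Ω => (0:ℝ)) = (0 : Ω → ℝ) from rfl, condExp_zero]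
    rw [this]
    ext x
    simp [hε.not_ge, dist_self]
  simp only [h0, measure_empty]
  exact tendsto_const_nhds



/-- Forward core: weak convergence implies convergence of conditional expectations of all
bounded `Alim`-measurable functions. -/
theorem cc_of_weakConv {Alim : MeasurableSpace Ω} (hle : Alim ≤ H)
    (hW : WeakConvSigma μ A Alim) {g : Ω → ℝ} (hmg : Measurable[Alim] g)
    {C : ℝ} (hb : ∀ x, |g x| ≤ C) :
    TendstoInMeasure μ (fun n => μ[g | A n]) atTop g := by
  -- integrability of g
  have hgsm : StronglyMeasurable[Alim] g := hmg.stronglyMeasurable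
  have hgi : Integrable g μ := by
    refine memLp_one_iff_integrable.mp ?_
    exact MemLp.of_bound ((hgsm.mono hle).aestronglyMeasurable) C
      (Eventually.of_forall fun x => by simpa [Real.norm_eq_abs] using hb x)
  -- CC holds for all Alim-simple functions
  have hsimple : ∀ e : @SimpleFunc Ω Alim ℝ,
      TendstoInMeasure μ (fun n => μ[⇑e | A n]) atTop ⇑e := by
    intro e
    refine @SimpleFunc.induction Ω ℝ Alim _
      (fun e => TendstoInMeasure μ (fun n => μ[⇑e | A n]) atTop ⇑e) ?_ ?_ e
    · intro c s hs
      have hcoe : ⇑(@SimpleFunc.piecewise Ω ℝ Alim s hs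
            (SimpleFunc.const Ω c) (SimpleFunc.const Ω (0:ℝ)))
          = fun x => c * s.indicator (fun _ => (1:ℝ)) x := by
        funext x
        rw [SimpleFunc.coe_piecewise]
        by_cases hx : x ∈ s <;>
          simp [Set.piecewise, Set.indicator, hx]
      rw [hcoe]
      exact cc_const_mul c (hW s hs)
    · intro f g _ hf hg
      have hfi : Integrable (⇑f) μ := by
        obtain ⟨C, hC⟩ := SimpleFunc.exists_forall_norm_le f
        exact memLp_one_iff_integrable.mp (MemLp.of_bound
          ((f.stronglyMeasurable.mono hle).aestronglyMeasurable) C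
          (Eventually.of_forall hC))
      have hgi : Integrable (⇑g) μ := by
        obtain ⟨C, hC⟩ := SimpleFunc.exists_forall_norm_le g
        exact memLp_one_iff_integrable.mp (MemLp.of_bound
          ((g.stronglyMeasurable.mono hle).aestronglyMeasurable) C
          (Eventually.of_forall hC))
      have hco : ⇑(f + g) = fun x => f x + g x := by funext x; simp
      rw [hco]
      exact cc_add hfi hgi hf hg
  -- approximation of g by simple functions in L¹
  refine cc_of_approx hgi ?_
  intro η hη
  haveI : TopologicalSpace.SeparableSpace (Set.univ : Set ℝ) := by infer_instance
  set ν := μ.trim hle with hν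
  haveI : IsFiniteMeasure ν := MeasureTheory.isFiniteMeasure_trim hle
  have hgν : eLpNorm (fun x => g x - 0) 1 ν < ∞ := by
    simp only [sub_zero]
    have : eLpNorm g 1 ν = eLpNorm g 1 μ := eLpNorm_trim hle hgsm
    rw [this]
    exact (memLp_one_iff_integrable.mpr hgi).2
  have htend := SimpleFunc.tendsto_approxOn_Lp_eLpNorm (μ := ν) hmg
    (Set.mem_univ (0:ℝ)) ENNReal.one_ne_top
    (Eventually.of_forall fun x => by simp [closure_univ]) hgν
  obtain ⟨m, hm⟩ := (ENNReal.tendsto_atTop_zero.mp htend) η (pos_iff_ne_zero.mpr hη)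
  set e := SimpleFunc.approxOn g hmg Set.univ 0 (Set.mem_univ _) m with he
  refine ⟨⇑e, ?_, hsimple e, ?_⟩
  · obtain ⟨C', hC'⟩ := SimpleFunc.exists_forall_norm_le e
    exact memLp_one_iff_integrable.mp (MemLp.of_bound
      ((e.stronglyMeasurable.mono hle).aestronglyMeasurable) C' (Eventually.of_forall hC'))
  · have h1 : eLpNorm (fun x => g x - e x) 1 μ = eLpNorm (⇑e - g) 1 μ := by
      rw [← eLpNorm_neg]
      congr 1
      funext x
      simp [Pi.sub_apply, neg_sub]
    have h2 : eLpNorm (⇑e - g) 1 ν = eLpNorm (⇑e - g) 1 μ :=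
      eLpNorm_trim hle (e.stronglyMeasurable.sub hgsm)
    rw [h1, ← h2]
    exact hm m le_rfl



/-- The indicator of a cylinder set satisfies conditional-expectation convergence, assuming
the finite-dimensional hypothesis. -/
theorem cc_cylinder (X : ℝ → Ω → ℝ) (hXmeas : ∀ t, Measurable (X t)) (D : Set ℝ)
    (hfd : ∀ (k : ℕ) (t : Fin k → ℝ), (∀ i, t i ∈ D) →
        ∀ f : (Fin k → ℝ) → ℝ, Continuous f → (∃ C : ℝ, ∀ x, |f x| ≤ C) →
          TendstoInMeasure μ
            (fun n => μ[fun ω => f (fun i => X (t i) ω) | A n]) atTop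
            (fun ω => f (fun i => X (t i) ω)))
    (k : ℕ) (t : Fin k → ℝ) (ht : ∀ i, t i ∈ D) {S : Set (Fin k → ℝ)}
    (hS : MeasurableSet S) :
    TendstoInMeasure μ
      (fun n => μ[Set.indicator ((fun ω i => X (t i) ω) ⁻¹' S) (fun _ => (1:ℝ)) | A n]) atTop
      (Set.indicator ((fun ω i => X (t i) ω) ⁻¹' S) (fun _ => (1:ℝ))) := by
  set Y : Ω → (Fin k → ℝ) := fun ω i => X (t i) ω with hYdef
  have hY : Measurable Y := measurable_pi_lambda _ fun i => hXmeas (t i)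
  set ν : Measure (Fin k → ℝ) := μ.map Y with hνdef
  haveI : IsProbabilityMeasure ν := Measure.isProbabilityMeasure_map hY.aemeasurable
  have hBmeas : MeasurableSet (Y ⁻¹' S) := hY hS
  have hind_int : Integrable (Set.indicator (Y ⁻¹' S) (fun _ => (1:ℝ))) μ := by
    refine memLp_one_iff_integrable.mp (MemLp.of_bound
      ((measurable_const.indicator hBmeas).aestronglyMeasurable) 1
      (Eventually.of_forall fun x => ?_))
    rw [Real.norm_eq_abs]
    rcases Set.indicator_eq_zero_or_self (Y ⁻¹' S) (fun _ => (1:ℝ)) x with h | h <;>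
      rw [h] <;> norm_num
  refine cc_of_approx hind_int ?_
  intro η hη
  have hη2 : η / 2 ≠ 0 := by
    simp only [ne_eq, ENNReal.div_eq_zero_iff]
    push_neg
    exact ⟨hη, by norm_num⟩
  obtain ⟨F, hFS, hFclosed, hFdiff⟩ := hS.exists_isClosed_diff_lt (measure_ne_top ν S) hη2
  obtain ⟨U, hSU, hUopen, -, hUdiff⟩ := hS.exists_isOpen_diff_lt (measure_ne_top ν S) hη2
  obtain ⟨f, hf0, hf1, hf01⟩ := exists_continuous_zero_one_of_isClosed
    (isClosed_compl_iff.mpr hUopen) hFclosed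
    (by
      rw [Set.disjoint_left]
      intro v hv hvF
      exact hv (hSU (hFS hvF)))
  have hfb : ∀ v, |f v| ≤ 1 := fun v =>
    abs_le.mpr ⟨by linarith [(hf01 v).1], (hf01 v).2⟩
  refine ⟨fun ω => f (Y ω), ?_, hfd k t ht ⇑f f.continuous ⟨1, hfb⟩, ?_⟩
  · exact memLp_one_iff_integrable.mp (MemLp.of_bound
      ((f.continuous.measurable.comp hY).aestronglyMeasurable) 1
      (Eventually.of_forall fun x => by rw [Real.norm_eq_abs]; exact hfb _))
  · -- the L¹ bound
    have hcomp : (fun ω => Set.indicator (Y ⁻¹' S) (fun _ => (1:ℝ)) ω - f (Y ω))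
        = (fun v => Set.indicator S (fun _ => (1:ℝ)) v - f v) ∘ Y := by
      funext ω
      simp only [Function.comp_apply]
      by_cases hω : Y ω ∈ S
      · rw [Set.indicator_of_mem hω, Set.indicator_of_mem (show ω ∈ Y ⁻¹' S from hω)]
      · rw [Set.indicator_of_notMem hω, Set.indicator_of_notMem
          (show ω ∉ Y ⁻¹' S from hω)]
    have hdm : AEStronglyMeasurable (fun v => Set.indicator S (fun _ => (1:ℝ)) v - f v) ν :=
      ((measurable_const.indicator hS).sub f.continuous.measurable).aestronglyMeasurable
    have hmap : eLpNorm (fun ω => Set.indicator (Y ⁻¹' S) (fun _ => (1:ℝ)) ω - f (Y ω)) 1 μ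
        = eLpNorm (fun v => Set.indicator S (fun _ => (1:ℝ)) v - f v) 1 ν := by
      rw [hcomp, hνdef]
      exact (eLpNorm_map_measure hdm hY.aemeasurable).symm
    rw [hmap]
    have hUF : MeasurableSet (U \ F) := hUopen.measurableSet.diff hFclosed.measurableSet
    have hbound : eLpNorm (fun v => Set.indicator S (fun _ => (1:ℝ)) v - f v) 1 ν ≤ ν (U \ F) := by
      rw [eLpNorm_one_eq_lintegral_enorm]
      have hpt : ∀ v, (‖Set.indicator S (fun _ => (1:ℝ)) v - f v‖₊ : ℝ≥0∞)
          ≤ (U \ F).indicator (fun _ => (1:ℝ≥0∞)) v := by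
        intro v
        by_cases hvF : v ∈ F
        · have h1 : Set.indicator S (fun _ => (1:ℝ)) v = 1 := Set.indicator_of_mem (hFS hvF) _
          have h2 : f v = 1 := hf1 hvF
          simp [h1, h2]
        · by_cases hvU : v ∈ U
          · have hmem : v ∈ U \ F := ⟨hvU, hvF⟩
            rw [Set.indicator_of_mem hmem]
            have habs : |Set.indicator S (fun _ => (1:ℝ)) v - f v| ≤ 1 := by
              obtain ⟨hl, hr⟩ := hf01 v
              have hind01 : Set.indicator S (fun _ => (1:ℝ)) v = 0 ∨
                  Set.indicator S (fun _ => (1:ℝ)) v = 1 := by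
                rcases Set.indicator_eq_zero_or_self S (fun _ => (1:ℝ)) v with h | h
                · exact Or.inl h
                · exact Or.inr h
              rcases hind01 with h | h <;> rw [h, abs_le] <;> constructor <;> linarith
            have hnn : ‖Set.indicator S (fun _ => (1:ℝ)) v - f v‖₊ ≤ (1 : ℝ≥0) := by
              rw [← NNReal.coe_le_coe, coe_nnnorm, Real.norm_eq_abs]
              simpa using habs
            exact_mod_cast hnn
          · have h1 : Set.indicator S (fun _ => (1:ℝ)) v = 0 :=
              Set.indicator_of_notMem (fun hvS => hvU (hSU hvS)) _
            have h2 : f v = 0 := hf0 hvU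
            have hmem : v ∉ U \ F := fun hc => hvU hc.1
            simp [h1, h2, Set.indicator_of_notMem hmem]
      calc ∫⁻ v, (‖Set.indicator S (fun _ => (1:ℝ)) v - f v‖₊ : ℝ≥0∞) ∂ν
          ≤ ∫⁻ v, (U \ F).indicator (fun _ => (1:ℝ≥0∞)) v ∂ν := lintegral_mono hpt
        _ = ν (U \ F) := by rw [lintegral_indicator  hUF]; simp
    refine le_trans hbound ?_
    have hsplit : U \ F ⊆ (U \ S) ∪ (S \ F) := by
      intro v hv
      by_cases hvS : v ∈ S
      · exact Or.inr ⟨hvS, hv.2⟩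
      · exact Or.inl ⟨hv.1, hvS⟩
    calc ν (U \ F) ≤ ν ((U \ S) ∪ (S \ F)) := measure_mono hsplit
      _ ≤ ν (U \ S) + ν (S \ F) := measure_union_le _ _
      _ ≤ η / 2 + η / 2 := add_le_add hUdiff.le hFdiff.le
      _ = η := ENNReal.add_halves η



theorem indicator_integrable {B : Set Ω} (hB : MeasurableSet B) :
    Integrable (Set.indicator B (fun _ => (1:ℝ))) μ := by
  refine memLp_one_iff_integrable.mp (MemLp.of_bound
    ((measurable_const.indicator hB).aestronglyMeasurable) 1
    (Eventually.of_forall fun x => ?_))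
  rw [Real.norm_eq_abs]
  rcases Set.indicator_eq_zero_or_self B (fun _ => (1:ℝ)) x with h | h <;> rw [h] <;> norm_num



end AuxHelpers

section AuxSigma

variable {Ω : Type*}

/-- Cylinder sets over times in `D`. -/
def cylSets (X : ℝ → Ω → ℝ) (D : Set ℝ) : Set (Set Ω) :=
  {B | ∃ (k : ℕ) (t : Fin k → ℝ) (S : Set (Fin k → ℝ)),
    (∀ i, t i ∈ D) ∧ MeasurableSet S ∧ B = (fun ω i => X (t i) ω) ⁻¹' S}

theorem isPiSystem_cylSets (X : ℝ → Ω → ℝ) (D : Set ℝ) : IsPiSystem (cylSets X D) := by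
  rintro B1 ⟨k1, t1, S1, ht1, hS1, rfl⟩ B2 ⟨k2, t2, S2, ht2, hS2, rfl⟩ -
  refine ⟨k1 + k2, Fin.append t1 t2,
    (fun v (i : Fin k1) => v (Fin.castAdd k2 i)) ⁻¹' S1 ∩
      (fun v (j : Fin k2) => v (Fin.natAdd k1 j)) ⁻¹' S2, ?_, ?_, ?_⟩
  · intro i
    refine Fin.addCases (fun j => ?_) (fun j => ?_) i
    · rw [Fin.append_left]; exact ht1 j
    · rw [Fin.append_right]; exact ht2 j
  · exact ((measurable_pi_lambda _ fun i => measurable_pi_apply _) hS1).inter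
      ((measurable_pi_lambda _ fun j => measurable_pi_apply _) hS2)
  · ext ω
    simp only [Set.mem_inter_iff, Set.mem_preimage]
    have e1 : (fun i : Fin k1 => X (Fin.append t1 t2 (Fin.castAdd k2 i)) ω)
        = fun i => X (t1 i) ω := funext fun i => by rw [Fin.append_left]
    have e2 : (fun j : Fin k2 => X (Fin.append t1 t2 (Fin.natAdd k1 j)) ω)
        = fun j => X (t2 j) ω := funext fun j => by rw [Fin.append_right]
    rw [e1, e2]

/-- Density: there are points of `D` just to the right of any `t ∈ [0, T)`. -/
theorem exists_D_right {T : ℝ} {D : Set ℝ} (hDdense : Set.Icc 0 T ⊆ closure D)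
    {t : ℝ} (ht0 : 0 ≤ t) (htT : t < T) {ε : ℝ} (hε : 0 < ε) :
    ∃ d ∈ D, t < d ∧ d < t + ε := by
  set s0 := min T (t + ε/2) with hs0
  have hts0 : t < s0 := lt_min htT (by linarith)
  have hs0Icc : s0 ∈ Set.Icc 0 T := ⟨le_trans ht0 hts0.le, min_le_left _ _⟩
  have hclo := hDdense hs0Icc
  rw [Metric.mem_closure_iff] at hclo
  have hr : 0 < min (s0 - t) (ε/2) := lt_min (by linarith) (by linarith)
  obtain ⟨d, hdD, hdist⟩ := hclo _ hr
  rw [Real.dist_eq, abs_lt] at hdist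
  refine ⟨d, hdD, ?_, ?_⟩
  · have := hdist.2
    have h1 : min (s0 - t) (ε/2) ≤ s0 - t := min_le_left _ _
    linarith
  · have := hdist.1
    have h1 : min (s0 - t) (ε/2) ≤ ε/2 := min_le_right _ _
    have h2 : s0 ≤ t + ε/2 := min_le_right _ _
    linarith

theorem measurable_gen {T : ℝ} (hT : 0 < T) (X : ℝ → Ω → ℝ)
    (hXcadlag : ∀ ω, (∀ t ∈ Set.Ico 0 T,
      Filter.Tendsto (fun s => X s ω) (nhdsWithin t (Set.Ioi t)) (nhds (X t ω))))
    {D : Set ℝ} (hD : D ⊆ Set.Icc 0 T) (hDdense : Set.Icc 0 T ⊆ closure D) (hTD : T ∈ D)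
    {t : ℝ} (ht : t ∈ Set.Icc 0 T) :
    Measurable[MeasurableSpace.generateFrom (cylSets X D)] (X t) := by
  have hD1 : ∀ d ∈ D, Measurable[MeasurableSpace.generateFrom (cylSets X D)] (X d) := by
    intro d hd S hS
    apply MeasurableSpace.measurableSet_generateFrom
    refine ⟨1, fun _ => d, (fun v : Fin 1 → ℝ => v 0) ⁻¹' S, fun _ => hd,
      measurable_pi_apply 0 hS, ?_⟩
    ext ω
    simp
  rcases eq_or_lt_of_le ht.2 with rfl | htT
  · exact hD1 t hTD
  · -- approximate from the right within D
    have hukey : ∀ m : ℕ, ∃ d ∈ D, t < d ∧ d < t + 1/(m+1) := by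
      intro m
      exact exists_D_right hDdense ht.1 htT (by positivity)
    choose u hu1 hu2 hu3 using hukey
    have hulim : Tendsto u atTop (nhdsWithin t (Set.Ioi t)) := by
      rw [tendsto_nhdsWithin_iff]
      constructor
      · have hupper : Tendsto (fun m : ℕ => t + 1/(m+1 : ℝ)) atTop (nhds t) := by
          have h1 := tendsto_one_div_add_atTop_nhds_zero_nat (𝕜 := ℝ)
          have h2 : Tendsto (fun _ : ℕ => t) atTop (nhds t) := tendsto_const_nhds
          have := h2.add h1
          simpa using this
        exact tendsto_of_tendsto_of_tendsto_of_le_of_le tendsto_const_nhds hupper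
          (fun m => (hu2 m).le) (fun m => (hu3 m).le)
      · exact Eventually.of_forall fun m => hu2 m
    have hXlim : ∀ ω, Tendsto (fun m => X (u m) ω) atTop (nhds (X t ω)) := by
      intro ω
      exact ((hXcadlag ω) t ⟨ht.1, htT⟩).comp hulim
    exact @measurable_of_tendsto_metrizable Ω ℝ
      (MeasurableSpace.generateFrom (cylSets X D)) _ _ _ _ _ _
      (fun m => hD1 (u m) (hu1 m)) (tendsto_pi_nhds.mpr hXlim)

theorem iSup_eq_generateFrom_cylSets {T : ℝ} (hT : 0 < T) (X : ℝ → Ω → ℝ)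
    (hXcadlag : ∀ ω, (∀ t ∈ Set.Ico 0 T,
      Filter.Tendsto (fun s => X s ω) (nhdsWithin t (Set.Ioi t)) (nhds (X t ω))))
    {D : Set ℝ} (hD : D ⊆ Set.Icc 0 T) (hDdense : Set.Icc 0 T ⊆ closure D) (hTD : T ∈ D) :
    (⨆ t ∈ Set.Icc (0:ℝ) T, MeasurableSpace.comap (X t) inferInstance)
      = MeasurableSpace.generateFrom (cylSets X D) := by
  refine le_antisymm ?_ ?_
  · refine iSup₂_le fun t ht => ?_
    exact Measurable.comap_le (measurable_gen hT X hXcadlag hD hDdense hTD ht)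
  · refine MeasurableSpace.generateFrom_le ?_
    rintro B ⟨k, t, S, htD, hS, rfl⟩
    have hY : Measurable[⨆ t ∈ Set.Icc (0:ℝ) T, MeasurableSpace.comap (X t) inferInstance]
        (fun ω (i : Fin k) => X (t i) ω) := by
      letI : MeasurableSpace Ω :=
        ⨆ t ∈ Set.Icc (0:ℝ) T, MeasurableSpace.comap (X t) inferInstance
      refine measurable_pi_lambda _ fun i => ?_
      refine measurable_iff_comap_le.mpr ?_
      exact le_iSup₂ (f := fun (r : ℝ) (_ : r ∈ Set.Icc (0:ℝ) T) =>
        MeasurableSpace.comap (X r) inferInstance) (t i) (hD (htD i))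
    exact hY hS



end AuxSigma

/-- Characterization of weak convergence of σ-algebras towards the σ-algebra generated
by a càdlàg process `X` on `[0,T]`: `A n` converges weakly to `σ(X_t, 0 ≤ t ≤ T)` iff
for every finite collection of times in a dense subset `D` of `[0,T]` containing `T`
and every bounded continuous function `f`, the conditional expectations
`E(f(X_{t_1},…,X_{t_k}) | A n)` converge in probability to `f(X_{t_1},…,X_{t_k})`. -/
theorem weakConvSigma_iff_finiteDimensional
    {Ω : Type*} {H : MeasurableSpace Ω} (μ : Measure Ω) [IsProbabilityMeasure μ]
    (T : ℝ) (hT : 0 < T) (X : ℝ → Ω → ℝ)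
    (hXmeas : ∀ t, Measurable (X t))
    (hXcadlag : ∀ ω, IsCadlagOn T (fun t => X t ω))
    (D : Set ℝ) (hD : D ⊆ Set.Icc 0 T) (hDdense : Set.Icc 0 T ⊆ closure D)
    (hTD : T ∈ D)
    (A : ℕ → MeasurableSpace Ω) :
    WeakConvSigma μ A (⨆ t ∈ Set.Icc (0:ℝ) T, MeasurableSpace.comap (X t) inferInstance) ↔
      ∀ (k : ℕ) (t : Fin k → ℝ), (∀ i, t i ∈ D) →
        ∀ f : (Fin k → ℝ) → ℝ, Continuous f → (∃ C : ℝ, ∀ x, |f x| ≤ C) →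
          TendstoInMeasure μ
            (fun n => μ[fun ω => f (fun i => X (t i) ω) | A n]) atTop
            (fun ω => f (fun i => X (t i) ω)) := by
  set G : MeasurableSpace Ω :=
    ⨆ t ∈ Set.Icc (0:ℝ) T, MeasurableSpace.comap (X t) inferInstance with hGdef
  have hGleH : G ≤ H := iSup₂_le fun t _ => (hXmeas t).comap_le
  constructor
  · -- forward
    intro hW k t ht f hf hbdd
    obtain ⟨C, hC⟩ := hbdd
    have hYG : Measurable[G] (fun ω (i : Fin k) => X (t i) ω) := by
      letI : MeasurableSpace Ω := G
      refine measurable_pi_lambda _ fun i => ?_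
      refine measurable_iff_comap_le.mpr ?_
      rw [hGdef]
      exact le_iSup₂ (f := fun (r : ℝ) (_ : r ∈ Set.Icc (0:ℝ) T) =>
        MeasurableSpace.comap (X r) inferInstance) (t i) (hD (ht i))
    have hgG : Measurable[G] (fun ω => f (fun i => X (t i) ω)) :=
      hf.measurable.comp hYG
    exact cc_of_weakConv hGleH hW hgG (fun x => hC _)
  · -- backward
    intro hfd
    intro B hB
    have hGeq : G = MeasurableSpace.generateFrom (cylSets X D) :=
      iSup_eq_generateFrom_cylSets hT X (fun ω => (hXcadlag ω).1) hD hDdense hTD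
    have hone : TendstoInMeasure μ (fun n => μ[(fun _ => (1:ℝ)) | A n]) atTop
        (fun _ => (1:ℝ)) := by
      have := hfd 0 (fun i => i.elim0) (fun i => i.elim0) (fun _ => (1:ℝ))
        continuous_const ⟨1, fun x => by norm_num⟩
      exact this
    refine MeasurableSpace.induction_on_inter (m := G)
      (C := fun B _ => TendstoInMeasure μ
        (fun n => μ[Set.indicator B (fun _ => (1:ℝ)) | A n]) atTop
        (Set.indicator B (fun _ => (1:ℝ))))
      (s := cylSets X D) hGeq (isPiSystem_cylSets X D) ?_ ?_ ?_ ?_ B hB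
    · -- empty
      show TendstoInMeasure μ
        (fun n => μ[Set.indicator (∅ : Set Ω) (fun _ => (1:ℝ)) | A n]) atTop
        (Set.indicator (∅ : Set Ω) (fun _ => (1:ℝ)))
      rw [Set.indicator_empty]
      exact cc_zero
    · -- basic
      rintro B ⟨k, t, S, htD, hS, rfl⟩
      exact cc_cylinder X hXmeas D hfd k t htD hS
    · -- compl
      intro B hBG hcc
      have hBH : MeasurableSet[H] B := hGleH B hBG
      have hBint : Integrable (Set.indicator B (fun _ => (1:ℝ))) μ := indicator_integrable hBH
      have hcompl_eq : Set.indicator Bᶜ (fun _ => (1:ℝ))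
          = fun x => (1:ℝ) - Set.indicator B (fun _ => (1:ℝ)) x := by
        funext x
        by_cases hx : x ∈ B <;> simp [Set.indicator, hx]
      rw [hcompl_eq]
      exact cc_sub (integrable_const 1) hBint hone hcc
    · -- disjoint unions
      intro g hdisj hmeasG hcc
      have hmeasH : ∀ i, MeasurableSet[H] (g i) := fun i => hGleH _ (hmeasG i)
      have hQmeas : ∀ m : ℕ, MeasurableSet[H] (⋃ i, ⋃ (_ : i < m), g i) := fun m =>
        MeasurableSet.iUnion fun i => MeasurableSet.iUnion fun _ => hmeasH i
      have hQcc : ∀ m : ℕ, TendstoInMeasure μ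
          (fun n => μ[Set.indicator (⋃ i, ⋃ (_ : i < m), g i) (fun _ => (1:ℝ)) | A n]) atTop
          (Set.indicator (⋃ i, ⋃ (_ : i < m), g i) (fun _ => (1:ℝ))) := by
        intro m
        induction m with
        | zero =>
          have : (⋃ i, ⋃ (_ : i < 0), g i) = (∅ : Set Ω) := by simp
          rw [this, Set.indicator_empty]
          exact cc_zero
        | succ m ih =>
          have hQsucc : (⋃ i, ⋃ (_ : i < m + 1), g i) = (⋃ i, ⋃ (_ : i < m), g i) ∪ g m :=
            Set.biUnion_lt_succ g m
          have hdis : Disjoint (⋃ i, ⋃ (_ : i < m), g i) (g m) := by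
            rw [Set.disjoint_left]
            rintro x hx hxm
            simp only [Set.mem_iUnion] at hx
            obtain ⟨i, him, hxi⟩ := hx
            exact Set.disjoint_left.mp (hdisj (Nat.ne_of_lt him)) hxi hxm
          have hindu : Set.indicator (⋃ i, ⋃ (_ : i < m + 1), g i) (fun _ => (1:ℝ))
              = fun x => Set.indicator (⋃ i, ⋃ (_ : i < m), g i) (fun _ => (1:ℝ)) x
                + Set.indicator (g m) (fun _ => (1:ℝ)) x := by
            rw [hQsucc, Set.indicator_union_of_disjoint hdis]
          rw [hindu]
          exact cc_add (indicator_integrable (hQmeas m)) (indicator_integrable (hmeasH m))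
            ih (hcc m)
      -- L¹ approximation by the partial unions
      refine cc_of_approx (indicator_integrable (MeasurableSet.iUnion hmeasH)) ?_
      intro η hη
      have hRmeas : ∀ m : ℕ, MeasurableSet[H] ((⋃ i, g i) \ ⋃ i, ⋃ (_ : i < m), g i) := fun m =>
        (MeasurableSet.iUnion hmeasH).diff (hQmeas m)
      have hRanti : Antitone (fun m => (⋃ i, g i) \ ⋃ i, ⋃ (_ : i < m), g i) := by
        intro m m' hmm'
        refine Set.diff_subset_diff_right ?_
        refine Set.iUnion_mono fun i => ?_
        exact Set.iUnion_subset fun hi => Set.subset_iUnion_of_subset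
          (lt_of_lt_of_le hi hmm') subset_rfl
      have hRempty : (⋂ m, ((⋃ i, g i) \ ⋃ i, ⋃ (_ : i < m), g i)) = ∅ := by
        ext x
        simp only [Set.mem_iInter, Set.mem_diff, Set.mem_iUnion, Set.mem_empty_iff_false,
          iff_false]
        intro h
        obtain ⟨⟨i, hxi⟩, -⟩ := h 0
        obtain ⟨-, hnot⟩ := h (i + 1)
        exact hnot ⟨i, Nat.lt_succ_self i, hxi⟩
      have htend := tendsto_measure_iInter_atTop (μ := μ)
        (fun m => (hRmeas m).nullMeasurableSet) hRanti ⟨0, measure_ne_top μ _⟩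
      rw [hRempty, measure_empty] at htend
      obtain ⟨m, hm⟩ := ENNReal.tendsto_atTop_zero.mp htend η (pos_iff_ne_zero.mpr hη)
      refine ⟨Set.indicator (⋃ i, ⋃ (_ : i < m), g i) (fun _ => (1:ℝ)),
        indicator_integrable (hQmeas m), hQcc m, ?_⟩
      have hdiffeq : (fun x => Set.indicator (⋃ i, g i) (fun _ => (1:ℝ)) x
          - Set.indicator (⋃ i, ⋃ (_ : i < m), g i) (fun _ => (1:ℝ)) x)
          = Set.indicator ((⋃ i, g i) \ ⋃ i, ⋃ (_ : i < m), g i) (fun _ => (1:ℝ)) := by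
        funext x
        have hQsubU : (⋃ i, ⋃ (_ : i < m), g i) ⊆ ⋃ i, g i := by
          refine Set.iUnion_subset fun i => Set.iUnion_subset fun _ => Set.subset_iUnion g i
        by_cases hxQ : x ∈ ⋃ i, ⋃ (_ : i < m), g i
        · rw [Set.indicator_of_mem hxQ, Set.indicator_of_mem (hQsubU hxQ),
            Set.indicator_of_notMem (fun hc => hc.2 hxQ)]
          ring
        · by_cases hxU : x ∈ ⋃ i, g i
          · rw [Set.indicator_of_mem hxU, Set.indicator_of_notMem hxQ,
              Set.indicator_of_mem (show x ∈ (⋃ i, g i) \ ⋃ i, ⋃ (_ : i < m), g i from ⟨hxU, hxQ⟩)]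
            ring
          · rw [Set.indicator_of_notMem hxU, Set.indicator_of_notMem hxQ,
              Set.indicator_of_notMem (fun hc => hxU hc.1)]
            ring
      rw [hdiffeq]
      have : eLpNorm (Set.indicator ((⋃ i, g i) \ ⋃ i, ⋃ (_ : i < m), g i) (fun _ => (1:ℝ))) 1 μ
          ≤ μ ((⋃ i, g i) \ ⋃ i, ⋃ (_ : i < m), g i) := by
        rw [eLpNorm_one_eq_lintegral_enorm]
        have hpt : ∀ x, (‖Set.indicator ((⋃ i, g i) \ ⋃ i, ⋃ (_ : i < m), g i)
            (fun _ => (1:ℝ)) x‖₊ : ℝ≥0∞)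
            ≤ ((⋃ i, g i) \ ⋃ i, ⋃ (_ : i < m), g i).indicator (fun _ => (1:ℝ≥0∞)) x := by
          intro x
          by_cases hx : x ∈ (⋃ i, g i) \ ⋃ i, ⋃ (_ : i < m), g i
          · rw [Set.indicator_of_mem hx, Set.indicator_of_mem hx]
            simp
          · rw [Set.indicator_of_notMem hx, Set.indicator_of_notMem hx]
            simp
        refine le_trans (lintegral_mono hpt) ?_
        rw [lintegral_indicator (hRmeas m)]
        simp
      exact le_trans this (hm m le_rfl)
end

section
/- If (A^n) and (B^n) are two sequences of sub-σ-algebras converging weakly to A and B respectively, then the σ-algebras A^n ∨ B^n (generated by the union) converge weakly to A ∨ B. -/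
open MeasureTheory Filter Set Topology NNReal ENNReal

namespace WeakConvSigmaAux

variable {Ω : Type*} {H : MeasurableSpace Ω} {μ : Measure Ω} [IsProbabilityMeasure μ]

noncomputable def ind (s : Set Ω) : Ω → ℝ := Set.indicator s fun _ => (1 : ℝ)

lemma ind_abs_le_one (s : Set Ω) (x : Ω) : |ind s x| ≤ 1 := by
  by_cases hx : x ∈ s <;> simp [ind, hx]

lemma ind_integrable {s : Set Ω} (hs : MeasurableSet[H] s) : Integrable (ind s) μ :=
  (integrable_const (1 : ℝ)).indicator hs

lemma condexp_ind_abs_le_one {m : MeasurableSpace Ω} (s : Set Ω) :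
    ∀ᵐ x ∂μ, |(μ[ind s | m]) x| ≤ ((1 : ℝ≥0) : ℝ) :=
  ae_bdd_condExp_of_ae_bdd (ae_of_all _ fun x => by simpa using ind_abs_le_one s x) (R := 1)

/-- key estimate: `‖E[g|m] - g‖₁ ≤ 2 ‖Y - g‖₁` for `m`-measurable `Y`. -/
lemma eLpNorm_condexp_sub_le {m : MeasurableSpace Ω} (hm : m ≤ H)
    {g Y : Ω → ℝ} (hg : Integrable g μ) (hY : StronglyMeasurable[m] Y) (hYi : Integrable Y μ) :
    eLpNorm (μ[g|m] - g) 1 μ ≤ 2 * eLpNorm (Y - g) 1 μ := by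
  have hYc : μ[Y|m] = Y := condExp_of_stronglyMeasurable hm hY hYi
  have h1 : μ[g|m] - g =ᵐ[μ] μ[g - Y|m] + (Y - g) := by
    filter_upwards [condExp_sub hg hYi (m := m)] with x hx
    simp only [Pi.add_apply, Pi.sub_apply] at *
    rw [hx, hYc]; ring
  calc eLpNorm (μ[g|m] - g) 1 μ = eLpNorm (μ[g - Y|m] + (Y - g)) 1 μ := eLpNorm_congr_ae h1
    _ ≤ eLpNorm (μ[g - Y|m]) 1 μ + eLpNorm (Y - g) 1 μ :=
        eLpNorm_add_le ((stronglyMeasurable_condExp.mono hm).aestronglyMeasurable)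
          (((hY.mono hm).aestronglyMeasurable).sub hg.aestronglyMeasurable) le_rfl
    _ ≤ eLpNorm (g - Y) 1 μ + eLpNorm (Y - g) 1 μ :=
        add_le_add_left (eLpNorm_one_condExp_le_eLpNorm _) _
    _ = 2 * eLpNorm (Y - g) 1 μ := by
        rw [show g - Y = -(Y - g) by ring, eLpNorm_neg, two_mul]

/-- convergence in measure of bounded condexps upgrades to L¹ convergence. -/
lemma l1_of_weak {F : ℕ → MeasurableSpace Ω} (hF : ∀ n, F n ≤ H) {s : Set Ω}
    (hs : MeasurableSet[H] s)
    (h : TendstoInMeasure μ (fun n => μ[ind s | F n]) atTop (ind s)) :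
    Tendsto (fun n => eLpNorm (μ[ind s | F n] - ind s) 1 μ) atTop (𝓝 0) := by
  refine tendsto_Lp_finite_of_tendstoInMeasure le_rfl ENNReal.one_ne_top
    (fun n => (stronglyMeasurable_condExp.mono (hF n)).aestronglyMeasurable)
    (memLp_one_iff_integrable.2 (ind_integrable hs)) ?_ h
  refine unifIntegrable_of le_rfl ENNReal.one_ne_top
    (fun n => (stronglyMeasurable_condExp.mono (hF n)).aestronglyMeasurable)
    (fun ε hε => ⟨2, fun i => ?_⟩)
  have hz : {x | (2 : ℝ≥0) ≤ ‖(μ[ind s | F i]) x‖₊}.indicator (μ[ind s | F i]) =ᵐ[μ] 0 := by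
    filter_upwards [condexp_ind_abs_le_one (μ := μ) (m := F i) s] with x hx
    rw [Set.indicator_of_notMem]
    · rfl
    · intro hmem
      simp only [Set.mem_setOf_eq] at hmem
      have h2 : (2 : ℝ) ≤ ‖(μ[ind s | F i]) x‖ := by exact_mod_cast hmem
      rw [Real.norm_eq_abs] at h2
      have hx1 : |(μ[ind s | F i]) x| ≤ (1 : ℝ) := by simpa using hx
      linarith
  rw [eLpNorm_congr_ae hz, eLpNorm_zero]
  exact zero_le

lemma ind_inter (s t : Set Ω) : ind (s ∩ t) = fun x => ind s x * ind t x := by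
  funext x; by_cases hs : x ∈ s <;> by_cases ht : x ∈ t <;> simp [ind, hs, ht]

lemma eLpNorm_mul_sub_le {X Y x y : Ω → ℝ}
    (hX : AEStronglyMeasurable X μ) (hY : AEStronglyMeasurable Y μ)
    (hx : AEStronglyMeasurable x μ) (hy : AEStronglyMeasurable y μ)
    (hXb : ∀ᵐ w ∂μ, |X w| ≤ 1) (hyb : ∀ w, |y w| ≤ 1) :
    eLpNorm (fun w => X w * Y w - x w * y w) 1 μ
      ≤ eLpNorm (Y - y) 1 μ + eLpNorm (X - x) 1 μ := by
  have hdecomp : (fun w => X w * Y w - x w * y w)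
      = (fun w => X w * (Y w - y w)) + fun w => (X w - x w) * y w := by
    funext w; simp only [Pi.add_apply]; ring
  rw [hdecomp]
  refine le_trans (eLpNorm_add_le (hX.mul (hY.sub hy)) ((hX.sub hx).mul hy) le_rfl)
    (add_le_add ?_ ?_)
  · refine eLpNorm_mono_ae ?_
    filter_upwards [hXb] with w hw
    rw [Pi.sub_apply, Real.norm_eq_abs, Real.norm_eq_abs, abs_mul]
    exact mul_le_of_le_one_left (abs_nonneg _) hw
  · refine eLpNorm_mono_ae (ae_of_all _ fun w => ?_)
    rw [Pi.sub_apply, Real.norm_eq_abs, Real.norm_eq_abs, abs_mul]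
    exact mul_le_of_le_one_right (abs_nonneg _) (hyb w)

lemma tendsto_zero_of_le {u v : ℕ → ℝ≥0∞} (hv : Tendsto v atTop (𝓝 0))
    (h : ∀ n, u n ≤ v n) : Tendsto u atTop (𝓝 0) :=
  tendsto_of_tendsto_of_tendsto_of_le_of_le tendsto_const_nhds hv (fun _ => zero_le) h

lemma P_inter {A B : ℕ → MeasurableSpace Ω} (hA : ∀ n, A n ≤ H) (hB : ∀ n, B n ≤ H)
    {s t : Set Ω} (hsH : MeasurableSet[H] s) (htH : MeasurableSet[H] t)
    (hsA : Tendsto (fun n => eLpNorm (μ[ind s|A n] - ind s) 1 μ) atTop (𝓝 0))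
    (htB : Tendsto (fun n => eLpNorm (μ[ind t|B n] - ind t) 1 μ) atTop (𝓝 0)) :
    Tendsto (fun n => eLpNorm (μ[ind (s ∩ t)|A n ⊔ B n] - ind (s ∩ t)) 1 μ) atTop (𝓝 0) := by
  have hm : ∀ n, A n ⊔ B n ≤ H := fun n => sup_le (hA n) (hB n)
  have key : ∀ n, eLpNorm (μ[ind (s ∩ t)|A n ⊔ B n] - ind (s ∩ t)) 1 μ
      ≤ 2 * (eLpNorm (μ[ind t|B n] - ind t) 1 μ + eLpNorm (μ[ind s|A n] - ind s) 1 μ) := by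
    intro n
    have hXm : StronglyMeasurable[A n ⊔ B n] (μ[ind s|A n]) :=
      stronglyMeasurable_condExp.mono le_sup_left
    have hYm : StronglyMeasurable[A n ⊔ B n] (μ[ind t|B n]) :=
      stronglyMeasurable_condExp.mono le_sup_right
    have hXYi : Integrable (fun w => (μ[ind s|A n]) w * (μ[ind t|B n]) w) μ := by
      refine Integrable.bdd_mul (c := 1) integrable_condExp
        ((hXm.mono (hm n)).aestronglyMeasurable) ?_
      filter_upwards [condexp_ind_abs_le_one (μ := μ) (m := A n) s] with w hw
      simpa [Real.norm_eq_abs] using hw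
    have hmul : StronglyMeasurable[A n ⊔ B n]
        (fun w => (μ[ind s|A n]) w * (μ[ind t|B n]) w) := hXm.mul hYm
    refine le_trans
      (eLpNorm_condexp_sub_le (hm n) (ind_integrable (hsH.inter htH)) hmul hXYi) ?_
    refine mul_le_mul_right ?_ 2
    have heq : (fun w => (μ[ind s|A n]) w * (μ[ind t|B n]) w) - ind (s ∩ t)
        = fun w => (μ[ind s|A n]) w * (μ[ind t|B n]) w - ind s w * ind t w := by
      funext w; rw [ind_inter]; rfl
    rw [heq]
    refine eLpNorm_mul_sub_le ((hXm.mono (hm n)).aestronglyMeasurable)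
      ((hYm.mono (hm n)).aestronglyMeasurable)
      (ind_integrable hsH).aestronglyMeasurable (ind_integrable htH).aestronglyMeasurable ?_
      (ind_abs_le_one t)
    filter_upwards [condexp_ind_abs_le_one (μ := μ) (m := A n) s] with w hw
    simpa using hw
  refine tendsto_zero_of_le ?_ key
  have h0 := ENNReal.Tendsto.const_mul (a := 2) (htB.add hsA) (Or.inr ENNReal.ofNat_ne_top)
  simpa using h0

end WeakConvSigmaAux

namespace WeakConvSigmaAux

variable {Ω : Type*} {H : MeasurableSpace Ω} {μ : Measure Ω} [IsProbabilityMeasure μ]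

lemma P_empty {m : ℕ → MeasurableSpace Ω} :
    Tendsto (fun n => eLpNorm (μ[ind (∅ : Set Ω)|m n] - ind (∅ : Set Ω)) 1 μ) atTop (𝓝 0) := by
  have h0 : ind (∅ : Set Ω) = (0 : Ω → ℝ) := by funext x; simp [ind]
  have : (fun n => eLpNorm (μ[ind (∅ : Set Ω)|m n] - ind (∅ : Set Ω)) 1 μ) = fun _ => 0 := by
    funext n; rw [h0, condExp_zero]; simp
  rw [this]; exact tendsto_const_nhds

lemma P_compl {m : ℕ → MeasurableSpace Ω} (hm : ∀ n, m n ≤ H) {t : Set Ω}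
    (htH : MeasurableSet[H] t)
    (h : Tendsto (fun n => eLpNorm (μ[ind t|m n] - ind t) 1 μ) atTop (𝓝 0)) :
    Tendsto (fun n => eLpNorm (μ[ind tᶜ|m n] - ind tᶜ) 1 μ) atTop (𝓝 0) := by
  have h1 : ind (tᶜ) = (fun _ => (1 : ℝ)) - ind t := by
    funext x; by_cases hx : x ∈ t <;> simp [ind, hx]
  have heq : ∀ n, eLpNorm (μ[ind tᶜ|m n] - ind tᶜ) 1 μ
      = eLpNorm (μ[ind t|m n] - ind t) 1 μ := by
    intro n
    have hc : μ[(fun _ => (1 : ℝ))|m n] = fun _ => (1 : ℝ) := condExp_const (hm n) 1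
    have h2 : μ[ind tᶜ|m n] =ᵐ[μ] (fun _ => (1 : ℝ)) - μ[ind t|m n] := by
      rw [h1]
      refine (condExp_sub (integrable_const 1) (ind_integrable htH) _).trans ?_
      rw [hc]
    have h3 : μ[ind tᶜ|m n] - ind tᶜ =ᵐ[μ] -(μ[ind t|m n] - ind t) := by
      filter_upwards [h2] with x hx
      have hx1 : ind tᶜ x = 1 - ind t x := by rw [h1]; rfl
      simp only [Pi.sub_apply, Pi.neg_apply] at *
      rw [hx, hx1]; ring
    rw [eLpNorm_congr_ae h3, eLpNorm_neg]
  have : (fun n => eLpNorm (μ[ind tᶜ|m n] - ind tᶜ) 1 μ)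
      = fun n => eLpNorm (μ[ind t|m n] - ind t) 1 μ := funext heq
  rw [this]; exact h

lemma P_union2 {m : ℕ → MeasurableSpace Ω} (hm : ∀ n, m n ≤ H) {s t : Set Ω}
    (hsH : MeasurableSet[H] s) (htH : MeasurableSet[H] t) (hdisj : Disjoint s t)
    (hs : Tendsto (fun n => eLpNorm (μ[ind s|m n] - ind s) 1 μ) atTop (𝓝 0))
    (ht : Tendsto (fun n => eLpNorm (μ[ind t|m n] - ind t) 1 μ) atTop (𝓝 0)) :
    Tendsto (fun n => eLpNorm (μ[ind (s ∪ t)|m n] - ind (s ∪ t)) 1 μ) atTop (𝓝 0) := by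
  have key : ∀ n, eLpNorm (μ[ind (s ∪ t)|m n] - ind (s ∪ t)) 1 μ
      ≤ eLpNorm (μ[ind s|m n] - ind s) 1 μ + eLpNorm (μ[ind t|m n] - ind t) 1 μ := by
    intro n
    have h1 : ind (s ∪ t) = ind s + ind t := Set.indicator_union_of_disjoint hdisj _
    have h2 : μ[ind (s ∪ t)|m n] - ind (s ∪ t)
        =ᵐ[μ] (μ[ind s|m n] - ind s) + (μ[ind t|m n] - ind t) := by
      rw [h1]
      filter_upwards [condExp_add (ind_integrable hsH) (ind_integrable htH) (m := m n)]
        with x hx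
      simp only [Pi.add_apply, Pi.sub_apply] at *
      rw [hx]; ring
    rw [eLpNorm_congr_ae h2]
    exact eLpNorm_add_le
      (((stronglyMeasurable_condExp.mono (hm n)).aestronglyMeasurable).sub
        (ind_integrable hsH).aestronglyMeasurable)
      (((stronglyMeasurable_condExp.mono (hm n)).aestronglyMeasurable).sub
        (ind_integrable htH).aestronglyMeasurable) le_rfl
  refine tendsto_zero_of_le ?_ key
  simpa using hs.add ht

lemma P_approx {m : ℕ → MeasurableSpace Ω} (hm : ∀ n, m n ≤ H) {t : Set Ω}
    (htH : MeasurableSet[H] t)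
    (happ : ∀ ε : ℝ≥0∞, 0 < ε → ∃ s : Set Ω, MeasurableSet[H] s ∧
      eLpNorm (ind s - ind t) 1 μ ≤ ε ∧
      Tendsto (fun n => eLpNorm (μ[ind s|m n] - ind s) 1 μ) atTop (𝓝 0)) :
    Tendsto (fun n => eLpNorm (μ[ind t|m n] - ind t) 1 μ) atTop (𝓝 0) := by
  rw [ENNReal.tendsto_atTop_zero]
  intro ε hε
  have hε4 : 0 < ε / 4 := ENNReal.div_pos hε.ne' (by norm_num)
  obtain ⟨s, hsH, hclose, hconv⟩ := happ (ε / 4) hε4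
  obtain ⟨N, hN⟩ := ENNReal.tendsto_atTop_zero.1 hconv (ε / 4) hε4
  refine ⟨N, fun n hn => ?_⟩
  have hdecomp : μ[ind t|m n] - ind t =ᵐ[μ]
      μ[ind t - ind s|m n] + ((μ[ind s|m n] - ind s) + (ind s - ind t)) := by
    filter_upwards [condExp_sub (ind_integrable htH) (ind_integrable hsH) (m := m n)]
      with x hx
    simp only [Pi.add_apply, Pi.sub_apply] at *
    rw [hx]; ring
  have hmeas1 : AEStronglyMeasurable (μ[ind s|m n] - ind s) μ :=
    ((stronglyMeasurable_condExp.mono (hm n)).aestronglyMeasurable).sub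
      (ind_integrable hsH).aestronglyMeasurable
  have hmeas2 : AEStronglyMeasurable (ind s - ind t : Ω → ℝ) μ :=
    (ind_integrable hsH).aestronglyMeasurable.sub (ind_integrable htH).aestronglyMeasurable
  have hsym : eLpNorm (ind t - ind s : Ω → ℝ) 1 μ = eLpNorm (ind s - ind t : Ω → ℝ) 1 μ := by
    rw [show (ind t - ind s : Ω → ℝ) = -(ind s - ind t) by ring, eLpNorm_neg]
  calc eLpNorm (μ[ind t|m n] - ind t) 1 μ
      = eLpNorm (μ[ind t - ind s|m n] + ((μ[ind s|m n] - ind s) + (ind s - ind t))) 1 μ :=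
        eLpNorm_congr_ae hdecomp
    _ ≤ eLpNorm (μ[ind t - ind s|m n]) 1 μ
        + eLpNorm ((μ[ind s|m n] - ind s) + (ind s - ind t)) 1 μ :=
        eLpNorm_add_le ((stronglyMeasurable_condExp.mono (hm n)).aestronglyMeasurable)
          (hmeas1.add hmeas2) le_rfl
    _ ≤ eLpNorm (μ[ind t - ind s|m n]) 1 μ
        + (eLpNorm (μ[ind s|m n] - ind s) 1 μ + eLpNorm (ind s - ind t) 1 μ) :=
        add_le_add_right (eLpNorm_add_le hmeas1 hmeas2 le_rfl) _
    _ ≤ ε / 4 + (ε / 4 + ε / 4) := by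
        refine add_le_add ?_ (add_le_add (hN n hn) hclose)
        refine le_trans (eLpNorm_one_condExp_le_eLpNorm _) ?_
        rw [hsym]; exact hclose
    _ ≤ ε := by
        have h3 : ε / 4 + (ε / 4 + ε / 4) ≤ 4 * (ε / 4) := by
          rw [show (4 : ℝ≥0∞) * (ε / 4) = ε / 4 + (ε / 4 + (ε / 4 + ε / 4)) by ring]
          exact add_le_add_right (add_le_add_right (le_add_self) _) _
        refine le_trans h3 (le_of_eq ?_)
        exact ENNReal.mul_div_cancel' (by norm_num) (by norm_num)

end WeakConvSigmaAux

namespace WeakConvSigmaAux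

variable {Ω : Type*} {H : MeasurableSpace Ω} {μ : Measure Ω} [IsProbabilityMeasure μ]

lemma P_iUnion {m : ℕ → MeasurableSpace Ω} (hm : ∀ n, m n ≤ H) {f : ℕ → Set Ω}
    (hd : Pairwise (Function.onFun Disjoint f)) (hfH : ∀ i, MeasurableSet[H] (f i))
    (hP : ∀ i, Tendsto (fun n => eLpNorm (μ[ind (f i)|m n] - ind (f i)) 1 μ) atTop (𝓝 0)) :
    Tendsto (fun n => eLpNorm (μ[ind (⋃ i, f i)|m n] - ind (⋃ i, f i)) 1 μ) atTop (𝓝 0) := by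
  set T : Set Ω := ⋃ i, f i with hT
  set U : ℕ → Set Ω := fun K => ⋃ i, ⋃ _ : i < K, f i with hU
  have hUH : ∀ K, MeasurableSet[H] (U K) :=
    fun K => MeasurableSet.biUnion (Set.to_countable _) fun i _ => hfH i
  have hTH : MeasurableSet[H] T := MeasurableSet.iUnion hfH
  have hUsub : ∀ K, U K ⊆ T := fun K => Set.iUnion₂_subset fun i _ => Set.subset_iUnion f i
  have hUP : ∀ K, Tendsto (fun n => eLpNorm (μ[ind (U K)|m n] - ind (U K)) 1 μ) atTop (𝓝 0) := by
    intro K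
    induction K with
    | zero =>
      have h0 : U 0 = ∅ := by simp [hU]
      rw [h0]; exact P_empty
    | succ K ih =>
      have hsucc : U (K + 1) = U K ∪ f K := Set.biUnion_lt_succ f K
      rw [hsucc]
      refine P_union2 hm (hUH K) (hfH K) ?_ ih (hP K)
      rw [Set.disjoint_left]
      intro x hx hxK
      obtain ⟨i, hiK, hxi⟩ := by simpa [hU] using hx
      exact Set.disjoint_left.1 (hd (Nat.ne_of_lt hiK)) hxi hxK
  have hTU : ⋃ K, U K = T := by
    ext x
    simp only [hU, Set.mem_iUnion, hT]
    exact ⟨fun ⟨K, i, _, hx⟩ => ⟨i, hx⟩, fun ⟨i, hx⟩ => ⟨i + 1, i, Nat.lt_succ_self i, hx⟩⟩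
  have hmono : Monotone U := fun a b hab =>
    Set.iUnion₂_subset fun i hia x hx => Set.mem_biUnion (lt_of_lt_of_le hia hab) hx
  have htendU : Tendsto (fun K => μ (U K)) atTop (𝓝 (μ T)) := by
    have := tendsto_measure_iUnion_atTop (μ := μ) hmono
    rwa [hTU] at this
  have hdiff : Tendsto (fun K => μ (T \ U K)) atTop (𝓝 0) := by
    have heq : ∀ K, μ (T \ U K) = μ T - μ (U K) := fun K =>
      measure_diff (hUsub K) (hUH K).nullMeasurableSet (measure_ne_top μ _)
    simp_rw [heq]
    have := ENNReal.Tendsto.sub (tendsto_const_nhds (x := μ T)) htendU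
      (Or.inl (measure_ne_top μ T))
    simpa using this
  refine P_approx hm hTH ?_
  intro ε hε
  obtain ⟨K, hK⟩ := ENNReal.tendsto_atTop_zero.1 hdiff ε hε
  refine ⟨U K, hUH K, ?_, hUP K⟩
  have hindeq : (ind (U K) - ind T : Ω → ℝ) = -(ind (T \ U K)) := by
    funext x
    by_cases h1 : x ∈ U K
    · have h2 : x ∈ T := hUsub K h1
      simp [ind, h1, h2, fun h : x ∈ T \ U K => h.2 h1]
    · by_cases h2 : x ∈ T
      · simp [ind, h1, h2, Set.mem_diff, show x ∈ T \ U K from ⟨h2, h1⟩]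
      · simp [ind, h1, h2, fun h : x ∈ T \ U K => h2 h.1]
  rw [hindeq, eLpNorm_neg]
  have : eLpNorm (ind (T \ U K)) 1 μ = μ (T \ U K) := by
    rw [ind, eLpNorm_indicator_const (hTH.diff (hUH K)) one_ne_zero ENNReal.one_ne_top]
    simp
  rw [this]
  exact hK K le_rfl

end WeakConvSigmaAux

/-- If  weakly and  weakly, then  weakly. -/
theorem weakConvSigma_sup
    {Ω : Type*} {H : MeasurableSpace Ω} (μ : Measure Ω) [IsProbabilityMeasure μ]
    (A B : ℕ → MeasurableSpace Ω) (Alim Blim : MeasurableSpace Ω)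
    (hA : ∀ n, A n ≤ H) (hB : ∀ n, B n ≤ H) (hAlim : Alim ≤ H) (hBlim : Blim ≤ H)
    (hconvA : WeakConvSigma μ A Alim) (hconvB : WeakConvSigma μ B Blim) :
    WeakConvSigma μ (fun n => A n ⊔ B n) (Alim ⊔ Blim) := by
  classical
  open WeakConvSigmaAux in
  intro t ht
  have hm : ∀ n, A n ⊔ B n ≤ H := fun n => sup_le (hA n) (hB n)
  have hsupH : Alim ⊔ Blim ≤ H := sup_le hAlim hBlim
  set S : Set (Set Ω) :=
    {u | ∃ s₁ s₂, MeasurableSet[Alim] s₁ ∧ MeasurableSet[Blim] s₂ ∧ u = s₁ ∩ s₂} with hS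
  have hgen : (Alim ⊔ Blim) = MeasurableSpace.generateFrom S := by
    refine le_antisymm (sup_le ?_ ?_) (MeasurableSpace.generateFrom_le ?_)
    · intro u hu
      exact MeasurableSpace.measurableSet_generateFrom
        ⟨u, Set.univ, hu, MeasurableSet.univ, (Set.inter_univ u).symm⟩
    · intro u hu
      exact MeasurableSpace.measurableSet_generateFrom
        ⟨Set.univ, u, MeasurableSet.univ, hu, (Set.univ_inter u).symm⟩
    · rintro u ⟨s₁, s₂, h₁, h₂, rfl⟩
      exact MeasurableSet.inter ((le_sup_left : Alim ≤ Alim ⊔ Blim) _ h₁)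
        ((le_sup_right : Blim ≤ Alim ⊔ Blim) _ h₂)
  have hpi : IsPiSystem S := by
    rintro u ⟨a₁, a₂, ha₁, ha₂, rfl⟩ v ⟨b₁, b₂, hb₁, hb₂, rfl⟩ _
    refine ⟨a₁ ∩ b₁, a₂ ∩ b₂, ha₁.inter hb₁, ha₂.inter hb₂, ?_⟩
    ext x; simp only [Set.mem_inter_iff]; tauto
  have hP : Tendsto
      (fun n => eLpNorm (μ[WeakConvSigmaAux.ind t|A n ⊔ B n] - WeakConvSigmaAux.ind t) 1 μ)
      atTop (𝓝 0) := by
    refine MeasurableSpace.induction_on_inter (m := Alim ⊔ Blim)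
      (C := fun u _ => Tendsto
        (fun n => eLpNorm (μ[WeakConvSigmaAux.ind u|A n ⊔ B n] - WeakConvSigmaAux.ind u) 1 μ)
        atTop (𝓝 0)) hgen hpi ?_ ?_ ?_ ?_ t ht
    · exact P_empty
    · rintro u ⟨s₁, s₂, h₁, h₂, rfl⟩
      exact P_inter hA hB (hAlim _ h₁) (hBlim _ h₂)
        (l1_of_weak hA (hAlim _ h₁) (hconvA _ h₁))
        (l1_of_weak hB (hBlim _ h₂) (hconvB _ h₂))
    · intro u hu hPu
      exact P_compl hm (hsupH _ hu) hPu
    · intro f hdisj hmeasf hPf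
      exact P_iUnion hm hdisj (fun i => hsupH _ (hmeasf i)) hPf
  exact tendstoInMeasure_of_tendsto_eLpNorm one_ne_zero
    (fun n => (stronglyMeasurable_condExp.mono (hm n)).aestronglyMeasurable)
    (WeakConvSigmaAux.ind_integrable (hsupH _ ht)).aestronglyMeasurable hP
end

section
/- If (A^n) and (B^n) are sequences of sub-σ-algebras with A^n ⊆ B^n for all n, and A^n converges weakly to a σ-algebra A, then B^n also converges weakly to A. -/
open MeasureTheory Filter
open scoped ENNReal NNReal Topology

/-- If  for all  and  weakly, then  weakly. -/
theorem weakConvSigma_of_le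
    {Ω : Type*} {H : MeasurableSpace Ω} (μ : Measure Ω) [IsProbabilityMeasure μ]
    (A B : ℕ → MeasurableSpace Ω) (Alim : MeasurableSpace Ω)
    (hAB : ∀ n, A n ≤ B n) (hB : ∀ n, B n ≤ H) (hAlim : Alim ≤ H)
    (hconvA : WeakConvSigma μ A Alim) :
    WeakConvSigma μ B Alim := by
  intro S hS
  letI : MeasurableSpace Ω := H
  set f : Ω → ℝ := Set.indicator S (fun _ => (1 : ℝ)) with hf_def
  have hSmeas : MeasurableSet[H] S := hAlim S hS
  have hf_int : Integrable f μ := (integrable_const (1 : ℝ)).indicator hSmeas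
  have hf_mem : MemLp f 1 μ := memLp_one_iff_integrable.mpr hf_int
  have hf_aesm : AEStronglyMeasurable f μ := hf_mem.aestronglyMeasurable
  have hf_bdd : ∀ᵐ x ∂μ, |f x| ≤ (1 : NNReal) := by
    filter_upwards with x
    by_cases hx : x ∈ S <;> simp [hf_def, Set.indicator_of_mem, Set.indicator_of_notMem, hx]
  -- bound on conditional expectations
  have hg_bdd : ∀ n, ∀ᵐ x ∂μ, |(μ[f|A n]) x| ≤ (1 : NNReal) := fun n =>
    ae_bdd_condExp_of_ae_bdd hf_bdd
  have hg_aesm : ∀ n, AEStronglyMeasurable (μ[f|A n]) μ := fun n =>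
    (stronglyMeasurable_condExp.mono ((hAB n).trans (hB n))).aestronglyMeasurable
  -- uniform integrability of the A-conditional expectations
  have hui : UnifIntegrable (fun n => μ[f|A n]) 1 μ := by
    intro ε hε
    refine ⟨ε, hε, fun n s hs hμs => ?_⟩
    calc eLpNorm (s.indicator (μ[f|A n])) 1 μ
        ≤ eLpNorm (s.indicator (fun _ => (1 : ℝ))) 1 μ := by
          refine eLpNorm_mono_ae ?_
          filter_upwards [hg_bdd n] with x hx
          by_cases hxs : x ∈ s
          · simp only [Set.indicator_of_mem hxs]
            simpa [Real.norm_eq_abs] using hx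
          · simp [Set.indicator_of_notMem hxs]
      _ = ‖(1 : ℝ)‖₊ * μ s ^ (1 / (1 : ℝ≥0∞).toReal) :=
          eLpNorm_indicator_const₀ hs.nullMeasurableSet one_ne_zero ENNReal.one_ne_top
      _ ≤ ENNReal.ofReal ε := by simpa using hμs
  -- L¹ convergence of the A-conditional expectations
  have hL1 : Tendsto (fun n => eLpNorm ((μ[f|A n]) - f) 1 μ) atTop (𝓝 0) :=
    tendsto_Lp_finite_of_tendstoInMeasure le_rfl ENNReal.one_ne_top hg_aesm hf_mem hui
      (hconvA S hS)
  -- key bound: ‖E[f|Bₙ] - f‖₁ ≤ 2 ‖E[f|Aₙ] - f‖₁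
  have hkey : ∀ n, eLpNorm ((μ[f|B n]) - f) 1 μ ≤ 2 * eLpNorm ((μ[f|A n]) - f) 1 μ := by
    intro n
    have h1 : condExp (B n) μ (μ[f|A n]) = μ[f|A n] :=
      condExp_of_stronglyMeasurable (hB n) (stronglyMeasurable_condExp.mono (hAB n))
        integrable_condExp
    have h2 : (μ[f - μ[f|A n]|B n]) =ᵐ[μ] (μ[f|B n]) - μ[f|A n] := by
      refine (condExp_sub hf_int integrable_condExp _).trans ?_
      rw [h1]
    have h3 : eLpNorm ((μ[f|B n]) - μ[f|A n]) 1 μ ≤ eLpNorm ((μ[f|A n]) - f) 1 μ := by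
      calc eLpNorm ((μ[f|B n]) - μ[f|A n]) 1 μ
          = eLpNorm (μ[f - μ[f|A n]|B n]) 1 μ := (eLpNorm_congr_ae h2.symm)
        _ ≤ eLpNorm (f - μ[f|A n]) 1 μ := eLpNorm_one_condExp_le_eLpNorm _
        _ = eLpNorm ((μ[f|A n]) - f) 1 μ := by
            rw [← eLpNorm_neg]; congr 1; ext x; simp
    have h4 : (μ[f|B n]) - f = ((μ[f|B n]) - μ[f|A n]) + ((μ[f|A n]) - f) := by
      ext x; simp
    calc eLpNorm ((μ[f|B n]) - f) 1 μ
        ≤ eLpNorm ((μ[f|B n]) - μ[f|A n]) 1 μ + eLpNorm ((μ[f|A n]) - f) 1 μ := by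
          rw [h4]
          exact eLpNorm_add_le
            ((stronglyMeasurable_condExp.mono (hB n)).aestronglyMeasurable.sub (hg_aesm n))
            ((hg_aesm n).sub hf_aesm) le_rfl
      _ ≤ eLpNorm ((μ[f|A n]) - f) 1 μ + eLpNorm ((μ[f|A n]) - f) 1 μ :=
          add_le_add_left h3 _
      _ = 2 * eLpNorm ((μ[f|A n]) - f) 1 μ := (two_mul _).symm
  have hL1B : Tendsto (fun n => eLpNorm ((μ[f|B n]) - f) 1 μ) atTop (𝓝 0) := by
    have h2 : Tendsto (fun n => 2 * eLpNorm ((μ[f|A n]) - f) 1 μ) atTop (𝓝 0) := by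
      have := ENNReal.Tendsto.const_mul (a := 2) hL1 (Or.inr ENNReal.ofNat_ne_top)
      simpa using this
    exact tendsto_of_tendsto_of_tendsto_of_le_of_le tendsto_const_nhds h2
      (fun n => zero_le) hkey
  exact tendstoInMeasure_of_tendsto_eLpNorm one_ne_zero
    (fun n => (stronglyMeasurable_condExp.mono (hB n)).aestronglyMeasurable) hf_aesm hL1B
end

section
/- Let (G^n) be a sequence of right-continuous filtrations and G a right-continuous filtration on [0,T] such that G^n_t converges weakly to G_t for all t. Let τ be a G-stopping time taking finitely many values t_1 < ... < t_M. Then the random times τ_m := min{ t_i : E(1_{τ = t_i} | G^m_{t_i}) > 1/2 } are G^m-stopping times and τ_m converges in probability to τ. -/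
open MeasureTheory Filter

/-- Let `Gn` be right-continuous filtrations and `G` a right-continuous filtration on
`[0,T]` with `Gn m t → G t` weakly for all `t`.  Let `τ` be a `G`-stopping time taking
the finitely many values `t 1 < … < t M`.  Then the random times
`τₘ = min { t i : E(1_{τ = t i} | Gn m (t i)) > 1/2 }` (set to `T` when the set is
empty) are `Gn m`-stopping times and converge in probability to `τ`. -/
theorem stoppingTime_approximation_finiteValues
    {Ω : Type*} {H : MeasurableSpace Ω} (μ : Measure Ω) [IsProbabilityMeasure μ]
    (T : ℝ) (hT : 0 < T)
    (Gn : ℕ → ℝ → MeasurableSpace Ω) (G : ℝ → MeasurableSpace Ω)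
    (hGnmono : ∀ m, Monotone (Gn m)) (hGmono : Monotone G)
    (hGnle : ∀ m t, Gn m t ≤ H) (hGle : ∀ t, G t ≤ H)
    (hGnrc : ∀ m t, Gn m t = ⨅ u ∈ Set.Ioi t, Gn m u)
    (hGrc : ∀ t, G t = ⨅ u ∈ Set.Ioi t, G u)
    (hconv : ∀ t ∈ Set.Icc (0:ℝ) T, WeakConvSigma μ (fun m => Gn m t) (G t))
    (M : ℕ) (hM : 0 < M) (t : Fin M → ℝ) (htmono : StrictMono t)
    (htrange : ∀ i, t i ∈ Set.Icc (0:ℝ) T)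
    (τ : Ω → ℝ)
    (hτval : ∀ ω, ∃ i, τ ω = t i)
    (hτstop : ∀ s, MeasurableSet[G s] {ω | τ ω ≤ s})
    (τm : ℕ → Ω → ℝ)
    (hτm : ∀ m ω,
      τm m ω =
        if h : ∃ i, (1:ℝ)/2 <
            (μ[Set.indicator {ω' | τ ω' = t i} (fun _ => (1 : ℝ)) | Gn m (t i)]) ω
        then sInf { s | ∃ i, s = t i ∧ (1:ℝ)/2 <
            (μ[Set.indicator {ω' | τ ω' = t i} (fun _ => (1 : ℝ)) | Gn m (t i)]) ω }
        else T) :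
    (∀ m s, MeasurableSet[Gn m s] {ω | τm m ω ≤ s}) ∧
      TendstoInMeasure μ τm atTop τ := by
  classical
  -- notation
  set f : ℕ → Fin M → Ω → ℝ :=
    fun m i => μ[Set.indicator {ω' | τ ω' = t i} (fun _ => (1 : ℝ)) | Gn m (t i)] with hf
  -- the set appearing in the definition of τm
  set S : ℕ → Ω → Set ℝ := fun m ω =>
    { s | ∃ i, s = t i ∧ (1:ℝ)/2 < f m i ω } with hS
  have hSfin : ∀ m ω, (S m ω).Finite := by
    intro m ω
    apply (Set.finite_range t).subset
    rintro s ⟨i, rfl, -⟩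
    exact Set.mem_range_self i
  -- measurability of the events {f m i > 1/2}
  have hfmeas : ∀ m i, MeasurableSet[Gn m (t i)] {ω | (1:ℝ)/2 < f m i ω} := by
    intro m i
    exact measurableSet_lt (measurable_const)
      (stronglyMeasurable_condExp.measurable)
  -- τ takes value t i with an event in G (t i)
  have hBmeas : ∀ i : Fin M, MeasurableSet[G (t i)] {ω' | τ ω' = t i} := by
    intro i
    by_cases hi : (i : ℕ) = 0
    · have heq : {ω' | τ ω' = t i} = {ω' | τ ω' ≤ t i} := by
        ext ω
        simp only [Set.mem_setOf_eq]
        constructor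
        · intro h; exact h.le
        · intro h
          obtain ⟨j, hj⟩ := hτval ω
          rw [hj] at h ⊢
          have h1 : j ≤ i := htmono.le_iff_le.mp h
          have h2 : i ≤ j := by
            rw [Fin.le_def]; omega
          rw [le_antisymm h1 h2]
      rw [heq]
      exact hτstop (t i)
    · have hipos : 0 < (i : ℕ) := Nat.pos_of_ne_zero hi
      set i' : Fin M := ⟨(i : ℕ) - 1, lt_of_le_of_lt (Nat.sub_le _ _) i.isLt⟩ with hi'
      have hi'lt : i' < i := by rw [Fin.lt_def]; simp [hi']; omega
      have heq : {ω' | τ ω' = t i} = {ω' | τ ω' ≤ t i} \ {ω' | τ ω' ≤ t i'} := by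
        ext ω
        simp only [Set.mem_diff, Set.mem_setOf_eq]
        constructor
        · intro h
          refine ⟨h.le, ?_⟩
          rw [h]
          exact not_le.mpr (htmono hi'lt)
        · rintro ⟨h1, h2⟩
          obtain ⟨j, hj⟩ := hτval ω
          rw [hj] at h1 h2 ⊢
          have hj1 : j ≤ i := htmono.le_iff_le.mp h1
          have hj2 : ¬ j ≤ i' := fun h => h2 (htmono.monotone h)
          rw [Fin.le_def] at hj1
          rw [Fin.le_def] at hj2
          have : j = i := by
            apply Fin.ext; simp [hi'] at hj2; omega
          rw [this]
      rw [heq]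
      exact (hτstop (t i)).diff
        (hGmono (htmono.monotone hi'lt.le) _ (hτstop (t i')))
  constructor
  · -- stopping time property
    intro m s
    by_cases hs : T ≤ s
    · have heq : {ω | τm m ω ≤ s} = Set.univ := by
        ext ω
        simp only [Set.mem_setOf_eq, Set.mem_univ, iff_true]
        rw [hτm m ω]
        split_ifs with h
        · obtain ⟨i, hi⟩ := h
          have hmem : t i ∈ S m ω := ⟨i, rfl, hi⟩
          calc sInf (S m ω) ≤ t i := csInf_le (hSfin m ω).bddBelow hmem
            _ ≤ T := (htrange i).2
            _ ≤ s := hs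
        · exact hs
      rw [heq]
      exact MeasurableSet.univ
    · have heq : {ω | τm m ω ≤ s}
          = ⋃ i, ⋃ (_ : t i ≤ s), {ω | (1:ℝ)/2 < f m i ω} := by
        ext ω
        simp only [Set.mem_setOf_eq, Set.mem_iUnion]
        constructor
        · intro h
          rw [hτm m ω] at h
          split_ifs at h with hex
          · have hne : (S m ω).Nonempty := by
              obtain ⟨i, hi⟩ := hex
              exact ⟨t i, i, rfl, hi⟩
            have hmem : sInf (S m ω) ∈ S m ω := hne.csInf_mem (hSfin m ω)
            obtain ⟨i, hieq, hilt⟩ := hmem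
            exact ⟨i, hieq ▸ h, hilt⟩
          · exact absurd h hs
        · rintro ⟨i, his, hilt⟩
          rw [hτm m ω]
          rw [dif_pos ⟨i, hilt⟩]
          calc sInf (S m ω) ≤ t i := csInf_le (hSfin m ω).bddBelow ⟨i, rfl, hilt⟩
            _ ≤ s := his
      rw [heq]
      exact MeasurableSet.iUnion fun i => MeasurableSet.iUnion fun hi =>
        hGnmono m hi _ (hfmeas m i)
  · -- convergence in probability
    have key : ∀ m ω,
        (∀ i : Fin M, dist (f m i ω)
          (Set.indicator {ω' | τ ω' = t i} (fun _ => (1:ℝ)) ω) < 1/4) →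
        τm m ω = τ ω := by
      intro m ω hω
      obtain ⟨i0, hi0⟩ := hτval ω
      have hval0 : Set.indicator {ω' | τ ω' = t i0} (fun _ => (1:ℝ)) ω = 1 :=
        Set.indicator_of_mem (by exact hi0) _
      have h0 := hω i0
      rw [hval0, Real.dist_eq] at h0
      have hfi0 : (1:ℝ)/2 < f m i0 ω := by
        have := abs_lt.mp h0
        linarith [this.1]
      have hother : ∀ i : Fin M, i ≠ i0 → ¬ ((1:ℝ)/2 < f m i ω) := by
        intro i hne
        have hvali : Set.indicator {ω' | τ ω' = t i} (fun _ => (1:ℝ)) ω = 0 := by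
          apply Set.indicator_of_notMem
          simp only [Set.mem_setOf_eq, hi0]
          exact fun h => hne (htmono.injective h).symm
        have hi := hω i
        rw [hvali, Real.dist_eq, sub_zero] at hi
        have := abs_lt.mp hi
        intro hcon
        linarith [this.2]
      have hSeq : S m ω = {t i0} := by
        ext s
        simp only [Set.mem_singleton_iff]
        constructor
        · rintro ⟨i, rfl, hlt⟩
          by_cases h : i = i0
          · rw [h]
          · exact absurd hlt (hother i h)
        · rintro rfl
          exact ⟨i0, rfl, hfi0⟩
      rw [hτm m ω, dif_pos ⟨i0, hfi0⟩]
      show sInf (S m ω) = τ ω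
      rw [hSeq, csInf_singleton, hi0]
    rw [tendstoInMeasure_iff_dist]
    intro ε hε
    have hbound : ∀ m, μ {ω | ε ≤ dist (τm m ω) (τ ω)}
        ≤ ∑ i : Fin M, μ {ω | (1:ℝ)/4 ≤ dist (f m i ω)
            (Set.indicator {ω' | τ ω' = t i} (fun _ => (1:ℝ)) ω)} := by
      intro m
      have hsub : {ω | ε ≤ dist (τm m ω) (τ ω)}
          ⊆ ⋃ i : Fin M, {ω | (1:ℝ)/4 ≤ dist (f m i ω)
              (Set.indicator {ω' | τ ω' = t i} (fun _ => (1:ℝ)) ω)} := by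
        intro ω hω
        by_contra hnot
        simp only [Set.mem_iUnion, Set.mem_setOf_eq, not_exists, not_le] at hnot
        have := key m ω fun i => hnot i
        rw [Set.mem_setOf_eq, this, dist_self] at hω
        exact absurd hω (not_le.mpr hε)
      calc μ {ω | ε ≤ dist (τm m ω) (τ ω)}
          ≤ μ (⋃ i : Fin M, {ω | (1:ℝ)/4 ≤ dist (f m i ω)
              (Set.indicator {ω' | τ ω' = t i} (fun _ => (1:ℝ)) ω)}) :=
            measure_mono hsub
        _ ≤ ∑' i : Fin M, μ {ω | (1:ℝ)/4 ≤ dist (f m i ω)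
              (Set.indicator {ω' | τ ω' = t i} (fun _ => (1:ℝ)) ω)} :=
            measure_iUnion_le _
        _ = ∑ i : Fin M, μ {ω | (1:ℝ)/4 ≤ dist (f m i ω)
              (Set.indicator {ω' | τ ω' = t i} (fun _ => (1:ℝ)) ω)} :=
            tsum_fintype _
    have hsum : Tendsto (fun m => ∑ i : Fin M, μ {ω | (1:ℝ)/4 ≤ dist (f m i ω)
        (Set.indicator {ω' | τ ω' = t i} (fun _ => (1:ℝ)) ω)}) atTop (nhds 0) := by
      have h0 : (0 : ENNReal) = ∑ _i : Fin M, (0 : ENNReal) := by simp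
      rw [h0]
      apply tendsto_finset_sum
      intro i _
      exact tendstoInMeasure_iff_dist.mp (hconv (t i) (htrange i) {ω' | τ ω' = t i} (hBmeas i)) (1/4) (by norm_num)
    exact tendsto_of_tendsto_of_tendsto_of_le_of_le tendsto_const_nhds hsum
      (fun m => zero_le) hbound
end

section
/- Let (G^n) be a sequence of right-continuous filtrations and G a right-continuous filtration on [0,T] such that G^n_t converges weakly to G_t for all t. For every bounded G-stopping time τ, there exists a strictly increasing φ : ℕ → ℕ and a bounded sequence of random times (τ_n) such that each τ_{φ(n)} is a G^{φ(n)}-stopping time and τ_{φ(n)} converges in probability to τ. -/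
open MeasureTheory Filter ENNReal Topology

/-- Let `Gn` be right-continuous filtrations and `G` a right-continuous filtration on
`[0,T]` with `Gn n t → G t` weakly for all `t`.  For every bounded `G`-stopping time
`τ` there exist a strictly increasing `φ : ℕ → ℕ` and a bounded sequence of random
times `τn` such that each `τn (φ n)` is a `Gn (φ n)`-stopping time and
`τn (φ n) → τ` in probability. -/
theorem stoppingTime_approximation
    {Ω : Type*} {H : MeasurableSpace Ω} (μ : Measure Ω) [IsProbabilityMeasure μ]
    (T : ℝ) (hT : 0 < T)
    (Gn : ℕ → ℝ → MeasurableSpace Ω) (G : ℝ → MeasurableSpace Ω)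
    (hGnmono : ∀ n, Monotone (Gn n)) (hGmono : Monotone G)
    (hGnle : ∀ n t, Gn n t ≤ H) (hGle : ∀ t, G t ≤ H)
    (hGnrc : ∀ n t, Gn n t = ⨅ u ∈ Set.Ioi t, Gn n u)
    (hGrc : ∀ t, G t = ⨅ u ∈ Set.Ioi t, G u)
    (hconv : ∀ t ∈ Set.Icc (0:ℝ) T, WeakConvSigma μ (fun n => Gn n t) (G t))
    (τ : Ω → ℝ)
    (hτbdd : ∀ ω, τ ω ∈ Set.Icc (0:ℝ) T)
    (hτstop : ∀ s, MeasurableSet[G s] {ω | τ ω ≤ s}) :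
    ∃ (φ : ℕ → ℕ) (τn : ℕ → Ω → ℝ),
      StrictMono φ ∧
      (∃ C : ℝ, ∀ n ω, |τn n ω| ≤ C) ∧
      (∀ n s, MeasurableSet[Gn (φ n) s] {ω | τn (φ n) ω ≤ s}) ∧
      TendstoInMeasure μ (fun n => τn (φ n)) atTop τ := by
  classical
  -- grid points
  set tg : ℕ → ℕ → ℝ := fun k i => i * T / (k + 1) with htg
  have htg_nonneg : ∀ k i, 0 ≤ tg k i := by
    intro k i
    have h1 : (0:ℝ) ≤ (i:ℝ) * T := mul_nonneg (Nat.cast_nonneg i) hT.le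
    have h2 : (0:ℝ) < (k:ℝ) + 1 := by positivity
    exact div_nonneg h1 h2.le
  have htg_mono : ∀ k, Monotone (tg k) := by
    intro k i j hij
    have hij' : (i:ℝ) ≤ j := Nat.cast_le.mpr hij
    have hk : (0:ℝ) < (k:ℝ) + 1 := by positivity
    show (i:ℝ) * T / ((k:ℝ) + 1) ≤ (j:ℝ) * T / ((k:ℝ) + 1)
    have h := mul_le_mul_of_nonneg_right hij' hT.le
    exact div_le_div_of_nonneg_right h hk.le
  have htg_top : ∀ k, tg k (k + 1) = T := by
    intro k
    have hk : ((k:ℝ) + 1) ≠ 0 := by positivity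
    simp only [htg]
    push_cast
    field_simp
  have htg_mem : ∀ k, ∀ i ≤ k + 1, tg k i ∈ Set.Icc (0:ℝ) T := by
    intro k i hi
    refine ⟨htg_nonneg k i, ?_⟩
    calc tg k i ≤ tg k (k+1) := htg_mono k hi
    _ = T := htg_top k
  -- indicator targets and conditional expectations
  set B : ℕ → ℕ → Set Ω := fun k i => {ω | τ ω ≤ tg k i} with hB
  set X : ℕ → ℕ → ℕ → Ω → ℝ :=
    fun k n i => μ[Set.indicator (B k i) (fun _ => (1:ℝ)) | Gn n (tg k i)] with hX
  have hXmeas : ∀ k n i, MeasurableSet[Gn n (tg k i)] {ω | (1:ℝ)/2 < X k n i ω} := by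
    intro k n i
    exact measurableSet_lt measurable_const stronglyMeasurable_condExp.measurable
  -- the discretized random times
  set f : ℕ → ℕ → Ω → ℕ :=
    fun k n ω => sInf {i | i = k + 1 ∨ (1:ℝ)/2 < X k n i ω} with hf
  have hfmem : ∀ k n ω, f k n ω ∈ {i | i = k + 1 ∨ (1:ℝ)/2 < X k n i ω} := by
    intro k n ω
    exact Nat.sInf_mem ⟨k+1, Or.inl rfl⟩
  have hfle : ∀ k n ω, f k n ω ≤ k + 1 := by
    intro k n ω
    exact Nat.sInf_le (Or.inl rfl)
  set τ' : ℕ → ℕ → Ω → ℝ := fun k n ω => tg k (f k n ω) with hτ'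
  have hτ'bdd : ∀ k n ω, |τ' k n ω| ≤ T := by
    intro k n ω
    rw [abs_of_nonneg (htg_nonneg k _)]
    calc tg k (f k n ω) ≤ tg k (k+1) := htg_mono k (hfle k n ω)
    _ = T := htg_top k
  -- stopping time property
  have hstop : ∀ k n s, MeasurableSet[Gn n s] {ω | τ' k n ω ≤ s} := by
    intro k n s
    by_cases hs : 0 ≤ s
    · have hk : (0:ℝ) < (k:ℝ) + 1 := by positivity
      set j : ℕ := Nat.floor (s * ((k:ℝ) + 1) / T) with hj
      have hkey : {ω | τ' k n ω ≤ s}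
          = ⋃ i ∈ Finset.range (j + 1), {ω | i = k + 1 ∨ (1:ℝ)/2 < X k n i ω} := by
        ext ω
        simp only [Set.mem_setOf_eq, Set.mem_iUnion, Finset.mem_range, Nat.lt_succ_iff]
        constructor
        · intro h
          refine ⟨f k n ω, ?_, hfmem k n ω⟩
          have h1 : (f k n ω : ℝ) * T ≤ s * ((k:ℝ) + 1) := by
            rw [div_le_iff₀ hk] at h
            linarith
          have h2 : (f k n ω : ℝ) ≤ s * ((k:ℝ) + 1) / T := by
            rw [le_div_iff₀ hT]
            exact h1
          exact Nat.le_floor h2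
        · rintro ⟨i, hij, hiP⟩
          have h1 : (f k n ω : ℝ) ≤ s * ((k:ℝ) + 1) / T := by
            have : f k n ω ≤ j := le_trans (Nat.sInf_le hiP) hij
            calc (f k n ω : ℝ) ≤ (j:ℝ) := Nat.cast_le.mpr this
            _ ≤ s * ((k:ℝ) + 1) / T := Nat.floor_le (by positivity)
          show (f k n ω : ℝ) * T / ((k:ℝ) + 1) ≤ s
          rw [div_le_iff₀ hk]
          rw [le_div_iff₀ hT] at h1
          linarith
      rw [hkey]
      refine Finset.measurableSet_biUnion _ ?_
      intro i hi
      by_cases hik : i = k + 1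
      · have : {ω | i = k + 1 ∨ (1:ℝ)/2 < X k n i ω} = Set.univ := by
          ext ω; simp [hik]
        rw [this]; exact @MeasurableSet.univ _ (Gn n s)
      · have heq : {ω | i = k + 1 ∨ (1:ℝ)/2 < X k n i ω} = {ω | (1:ℝ)/2 < X k n i ω} := by
          ext ω; simp [hik]
        rw [heq]
        have hts : tg k i ≤ s := by
          have hi' : i ≤ j := by
            have := Finset.mem_range.mp hi
            omega
          have h1 : (i:ℝ) ≤ s * ((k:ℝ) + 1) / T :=
            le_trans (Nat.cast_le.mpr hi') (Nat.floor_le (by positivity))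
          rw [le_div_iff₀ hT] at h1
          show (i:ℝ) * T / ((k:ℝ) + 1) ≤ s
          rw [div_le_iff₀ hk]
          linarith
        exact hGnmono n hts _ (hXmeas k n i)
    · have : {ω | τ' k n ω ≤ s} = ∅ := by
        ext ω
        simp only [Set.mem_setOf_eq, Set.mem_empty_iff_false, iff_false, not_le]
        exact lt_of_lt_of_le (lt_of_not_ge hs) (htg_nonneg k _)
      rw [this]; exact @MeasurableSet.empty _ (Gn n s)
  -- convergence of the conditional expectations
  have hXconv : ∀ k, ∀ i ≤ k + 1, Tendsto
      (fun n => μ {ω | (1:ℝ)/2 ≤ dist (X k n i ω)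
        (Set.indicator (B k i) (fun _ => (1:ℝ)) ω)}) atTop (𝓝 0) := by
    intro k i hi
    exact tendstoInMeasure_iff_dist.mp (hconv (tg k i) (htg_mem k i hi) (B k i) (hτstop (tg k i))) (1/2) (by norm_num)
  -- key pointwise estimate
  have hkey : ∀ k n ω,
      (∀ i ≤ k + 1, dist (X k n i ω) (Set.indicator (B k i) (fun _ => (1:ℝ)) ω) < 1/2) →
      |τ' k n ω - τ ω| ≤ T / ((k:ℝ) + 1) := by
    intro k n ω hsmall
    have hiff : ∀ i ≤ k + 1, ((1:ℝ)/2 < X k n i ω ↔ τ ω ≤ tg k i) := by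
      intro i hi
      constructor
      · intro hXi
        by_contra hτi
        have hmem : ω ∉ B k i := hτi
        have hind : Set.indicator (B k i) (fun _ => (1:ℝ)) ω = 0 :=
          Set.indicator_of_notMem hmem _
        have := hsmall i hi
        rw [hind, Real.dist_eq, sub_zero] at this
        have := abs_lt.mp this
        linarith [this.2]
      · intro hτi
        have hmem : ω ∈ B k i := hτi
        have hind : Set.indicator (B k i) (fun _ => (1:ℝ)) ω = 1 :=
          Set.indicator_of_mem hmem _
        have := hsmall i hi
        rw [hind, Real.dist_eq] at this
        have := abs_lt.mp this
        linarith [this.1]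
    set i0 : ℕ := sInf {i | τ ω ≤ tg k i} with hi0
    have hne : k + 1 ∈ {i | τ ω ≤ tg k i} := by
      show τ ω ≤ tg k (k+1)
      rw [htg_top]
      exact (hτbdd ω).2
    have hi0le : i0 ≤ k + 1 := Nat.sInf_le hne
    have hi0mem : τ ω ≤ tg k i0 := Nat.sInf_mem ⟨k+1, hne⟩
    have hfeq : f k n ω = i0 := by
      apply le_antisymm
      · exact Nat.sInf_le (Or.inr ((hiff i0 hi0le).mpr hi0mem))
      · apply Nat.sInf_le
        rcases hfmem k n ω with h | h
        · show τ ω ≤ tg k (f k n ω)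
          rw [h, htg_top]
          exact (hτbdd ω).2
        · exact (hiff _ (hfle k n ω)).mp h
    have hmesh : tg k i0 - τ ω ≤ T / ((k:ℝ) + 1) := by
      rcases Nat.eq_zero_or_pos i0 with h0 | hpos
      · have : tg k i0 = 0 := by rw [h0]; simp [htg]
        rw [this]
        have := (hτbdd ω).1
        have hTk : (0:ℝ) ≤ T / ((k:ℝ)+1) := by positivity
        linarith
      · obtain ⟨m, hm⟩ : ∃ m, i0 = m + 1 := ⟨i0 - 1, (Nat.succ_pred_eq_of_pos hpos).symm⟩
        have hmnot : m ∉ {i | τ ω ≤ tg k i} := Nat.notMem_of_lt_sInf (by omega)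
        have hmlt : tg k m < τ ω := lt_of_not_ge hmnot
        have hstep : tg k (m+1) - tg k m = T / ((k:ℝ) + 1) := by
          simp only [htg]
          push_cast
          ring
        rw [hm]
        linarith
    show |tg k (f k n ω) - τ ω| ≤ T / ((k:ℝ) + 1)
    rw [hfeq, abs_le]
    constructor
    · have hTk : (0:ℝ) ≤ T / ((k:ℝ)+1) := by positivity
      linarith
    · exact hmesh
  -- the error events
  set E : ℕ → ℕ → ℕ → Set Ω := fun k n i =>
    {ω | (1:ℝ)/2 ≤ dist (X k n i ω) (Set.indicator (B k i) (fun _ => (1:ℝ)) ω)} with hE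
  have hincl : ∀ (k n : ℕ), {ω | T / ((k:ℝ)+1) < dist (τ' k n ω) (τ ω)}
      ⊆ ⋃ i ∈ Finset.range (k+2), E k n i := by
    intro k n ω hω
    simp only [Set.mem_setOf_eq] at hω
    by_contra hnot
    simp only [Set.mem_iUnion, Finset.mem_range, not_exists, hE, Set.mem_setOf_eq,
      not_le] at hnot
    have : ∀ i ≤ k + 1, dist (X k n i ω)
        (Set.indicator (B k i) (fun _ => (1:ℝ)) ω) < 1/2 := by
      intro i hi
      exact hnot i (by omega)
    have := hkey k n ω this
    rw [Real.dist_eq] at hω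
    linarith
  have hbound : ∀ (k n : ℕ), μ {ω | T / ((k:ℝ)+1) < dist (τ' k n ω) (τ ω)}
      ≤ ∑ i ∈ Finset.range (k+2), μ (E k n i) := by
    intro k n
    exact le_trans (measure_mono (hincl k n)) (measure_biUnion_finset_le _ _)
  have hsum0 : ∀ k, Tendsto (fun n => ∑ i ∈ Finset.range (k+2), μ (E k n i))
      atTop (𝓝 0) := by
    intro k
    have h0 : (∑ _i ∈ Finset.range (k+2), (0:ℝ≥0∞)) = 0 := by simp
    rw [← h0]
    exact tendsto_finset_sum (Finset.range (k+2))
      (fun i hi => hXconv k i (by simp only [Finset.mem_range] at hi; omega))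
  -- choose the subsequence
  have hN : ∀ k, ∃ N, ∀ n ≥ N,
      ∑ i ∈ Finset.range (k+2), μ (E k n i) < 1 / ((k:ℝ≥0∞) + 1) := by
    intro k
    have hpos : (0:ℝ≥0∞) < 1 / ((k:ℝ≥0∞) + 1) := by
      apply ENNReal.div_pos one_ne_zero
      exact ENNReal.add_ne_top.mpr ⟨ENNReal.natCast_ne_top k, ENNReal.one_ne_top⟩
    exact eventually_atTop.mp ((hsum0 k).eventually_lt_const hpos)
  choose N hNspec using hN
  set φ : ℕ → ℕ := fun k => k + ∑ i ∈ Finset.range (k+1), N i with hφ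
  have hφmono : StrictMono φ := by
    apply strictMono_nat_of_lt_succ
    intro k
    have : ∑ i ∈ Finset.range (k+1), N i ≤ ∑ i ∈ Finset.range (k+1+1), N i :=
      Finset.sum_le_sum_of_subset (Finset.range_subset_range.mpr (by omega))
    simp only [hφ]
    omega
  have hφge : ∀ k, N k ≤ φ k := by
    intro k
    have : N k ≤ ∑ i ∈ Finset.range (k+1), N i :=
      Finset.single_le_sum (fun i _ => Nat.zero_le _) (Finset.self_mem_range_succ k)
    simp only [hφ]
    omega
  set τn : ℕ → Ω → ℝ := fun m => τ' (Function.invFun φ m) m with hτn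
  have hinv : ∀ k, Function.invFun φ (φ k) = k :=
    Function.leftInverse_invFun hφmono.injective
  refine ⟨φ, τn, hφmono, ⟨T, fun m ω => hτ'bdd _ m ω⟩, ?_, ?_⟩
  · intro n s
    have : {ω | τn (φ n) ω ≤ s} = {ω | τ' n (φ n) ω ≤ s} := by
      simp only [hτn, hinv]
    rw [this]
    exact hstop n (φ n) s
  · rw [tendstoInMeasure_iff_dist]
    intro ε hε
    have hτneq : ∀ k, τn (φ k) = τ' k (φ k) := by
      intro k
      simp only [hτn, hinv]
    have hmain : ∀ᶠ k in atTop,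
        μ {ω | ε ≤ dist (τn (φ k) ω) (τ ω)} ≤ 1 / ((k:ℝ≥0∞) + 1) := by
      obtain ⟨K, hK⟩ := exists_nat_gt (T / ε)
      filter_upwards [eventually_ge_atTop K] with k hk
      have hmesh : T / ((k:ℝ)+1) < ε := by
        have h1 : T / ε < (k:ℝ) + 1 := by
          calc T / ε < (K:ℝ) := hK
          _ ≤ (k:ℝ) := Nat.cast_le.mpr hk
          _ ≤ (k:ℝ) + 1 := by linarith
        rw [div_lt_iff₀ hε] at h1
        rw [div_lt_iff₀ (by positivity : (0:ℝ) < (k:ℝ)+1)]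
        linarith
      have hsub : {ω | ε ≤ dist (τn (φ k) ω) (τ ω)}
          ⊆ {ω | T / ((k:ℝ)+1) < dist (τ' k (φ k) ω) (τ ω)} := by
        intro ω hω
        simp only [Set.mem_setOf_eq, hτneq k] at hω ⊢
        linarith
      calc μ {ω | ε ≤ dist (τn (φ k) ω) (τ ω)}
          ≤ μ {ω | T / ((k:ℝ)+1) < dist (τ' k (φ k) ω) (τ ω)} := measure_mono hsub
        _ ≤ ∑ i ∈ Finset.range (k+2), μ (E k (φ k) i) := hbound k (φ k)
        _ ≤ 1 / ((k:ℝ≥0∞) + 1) := (hNspec k (φ k) (hφge k)).le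
    have htend : Tendsto (fun k : ℕ => 1 / ((k:ℝ≥0∞) + 1)) atTop (𝓝 0) := by
      have h1 : Tendsto (fun k : ℕ => ((k:ℝ≥0∞) + 1)⁻¹) atTop (𝓝 0) := by
        have := ENNReal.tendsto_inv_nat_nhds_zero
        have h2 : Tendsto (fun k : ℕ => ((k+1 : ℕ) : ℝ≥0∞)⁻¹) atTop (𝓝 0) :=
          this.comp (tendsto_add_atTop_nat 1)
        simpa [Nat.cast_add] using h2
      simpa [one_div] using h1
    exact tendsto_of_tendsto_of_tendsto_of_le_of_le' tendsto_const_nhds htend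
      (Eventually.of_forall fun k => zero_le) hmain
end

section
/- Let (F^m) be a sequence of filtrations on [0,T] and F a filtration such that F^m_t converges weakly to F_t for every t ∈ [0,T]. Define the filtration F̃ by F̃_t = ⋁_m F^m_t. If X is a càdlàg process adapted to F that is a semimartingale with respect to F̃, then X is a semimartingale with respect to F. -/
open MeasureTheory Filter
open scoped ENNReal Topology

/-- The Bichteler–Dellacherie semimartingale property of a process `X` on `[0,T]`
with respect to a filtration `F`: for every sequence of bounded elementary
`F`-predictable processes (given by partition points `t n` in `[0,T]` and
`F (t n i)`-measurable coefficients `h n i`) converging uniformly to zero, the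
elementary stochastic integrals converge to zero in probability. -/
def BDSemimartingale {Ω : Type*} {mΩ : MeasurableSpace Ω} (μ : Measure Ω) (T : ℝ)
    (F : ℝ → MeasurableSpace Ω) (X : ℝ → Ω → ℝ) : Prop :=
  ∀ (k : ℕ → ℕ) (t : (n : ℕ) → Fin (k n + 1) → ℝ) (h : (n : ℕ) → Fin (k n) → Ω → ℝ),
    (∀ n, Monotone (t n)) → (∀ n i, t n i ∈ Set.Icc (0:ℝ) T) →
    (∀ n (i : Fin (k n)), StronglyMeasurable[F (t n i.castSucc)] (h n i)) →
    (∃ C : ℝ, ∀ n i ω, |h n i ω| ≤ C) →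
    (∀ ε > (0:ℝ), ∃ N, ∀ n ≥ N, ∀ i ω, |h n i ω| ≤ ε) →
    TendstoInMeasure μ
      (fun n ω => ∑ i : Fin (k n), h n i ω * (X (t n i.succ) ω - X (t n i.castSucc) ω))
      atTop (fun _ => (0:ℝ))

section Helpers

variable {Ω : Type*} {H : MeasurableSpace Ω} {μ : Measure Ω}

private lemma tim_iff {f : ℕ → Ω → ℝ} {g : Ω → ℝ} :
    TendstoInMeasure μ f atTop g ↔
      ∀ ε : ℝ, 0 < ε → ∀ δ : ℝ≥0∞, 0 < δ →
        ∃ N, ∀ n ≥ N, μ {ω | ε ≤ |f n ω - g ω|} ≤ δ := by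
  simp_rw [tendstoInMeasure_iff_dist, Real.dist_eq]
  constructor
  · intro hmain ε hε δ hδ
    exact ENNReal.tendsto_atTop_zero.mp (hmain ε hε) δ hδ
  · intro hmain ε hε
    exact ENNReal.tendsto_atTop_zero.mpr fun δ hδ => hmain ε hε δ hδ

private lemma tim_add_s8 {f f' : ℕ → Ω → ℝ} {g g' : Ω → ℝ}
    (h1 : TendstoInMeasure μ f atTop g) (h2 : TendstoInMeasure μ f' atTop g') :
    TendstoInMeasure μ (fun n ω => f n ω + f' n ω) atTop (fun ω => g ω + g' ω) := by
  rw [tim_iff] at h1 h2 ⊢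
  intro ε hε δ hδ
  obtain ⟨N1, hN1⟩ := h1 (ε/2) (by linarith) (δ/2) (ENNReal.half_pos hδ.ne')
  obtain ⟨N2, hN2⟩ := h2 (ε/2) (by linarith) (δ/2) (ENNReal.half_pos hδ.ne')
  refine ⟨max N1 N2, fun n hn => ?_⟩
  have hsub : {ω | ε ≤ |f n ω + f' n ω - (g ω + g' ω)|} ⊆
      {ω | ε/2 ≤ |f n ω - g ω|} ∪ {ω | ε/2 ≤ |f' n ω - g' ω|} := by
    intro ω hω
    simp only [Set.mem_setOf_eq, Set.mem_union] at *
    by_contra hcon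
    push_neg at hcon
    obtain ⟨ha, hb⟩ := hcon
    have habs : |f n ω + f' n ω - (g ω + g' ω)| ≤ |f n ω - g ω| + |f' n ω - g' ω| := by
      have : f n ω + f' n ω - (g ω + g' ω) = (f n ω - g ω) + (f' n ω - g' ω) := by ring
      rw [this]; exact abs_add_le _ _
    linarith
  calc μ {ω | ε ≤ |f n ω + f' n ω - (g ω + g' ω)|}
      ≤ μ ({ω | ε/2 ≤ |f n ω - g ω|} ∪ {ω | ε/2 ≤ |f' n ω - g' ω|}) := measure_mono hsub
    _ ≤ μ {ω | ε/2 ≤ |f n ω - g ω|} + μ {ω | ε/2 ≤ |f' n ω - g' ω|} := measure_union_le _ _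
    _ ≤ δ/2 + δ/2 := add_le_add (hN1 n (le_of_max_le_left hn)) (hN2 n (le_of_max_le_right hn))
    _ = δ := ENNReal.add_halves δ

private lemma tim_zero : TendstoInMeasure μ (fun (_ : ℕ) (_ : Ω) => (0:ℝ)) atTop (fun _ => 0) := by
  rw [tim_iff]
  intro ε hε δ hδ
  refine ⟨0, fun n _ => ?_⟩
  have : {ω : Ω | ε ≤ |(0:ℝ) - 0|} = ∅ := by
    ext ω; simp [hε.not_ge]
  rw [this, measure_empty]
  exact zero_le

private lemma tim0_add {f g : ℕ → Ω → ℝ}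
    (hf : TendstoInMeasure μ f atTop (fun _ => 0))
    (hg : TendstoInMeasure μ g atTop (fun _ => 0)) :
    TendstoInMeasure μ (fun n ω => f n ω + g n ω) atTop (fun _ => 0) :=
  (tim_add_s8 hf hg).congr_right (Eventually.of_forall fun ω => by norm_num)

private lemma tim0_of_le {f g : ℕ → Ω → ℝ} (hle : ∀ n ω, |f n ω| ≤ |g n ω|)
    (hg : TendstoInMeasure μ g atTop (fun _ => 0)) :
    TendstoInMeasure μ f atTop (fun _ => 0) := by
  rw [tim_iff] at hg ⊢
  intro ε hε δ hδ
  obtain ⟨N, hN⟩ := hg ε hε δ hδ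
  refine ⟨N, fun n hn => le_trans (measure_mono ?_) (hN n hn)⟩
  intro ω hω
  simp only [Set.mem_setOf_eq, sub_zero] at *
  exact hω.trans (hle n ω)

private lemma tim_sub_zero {f : ℕ → Ω → ℝ} {g : Ω → ℝ}
    (h : TendstoInMeasure μ f atTop g) :
    TendstoInMeasure μ (fun n ω => f n ω - g ω) atTop (fun _ => 0) := by
  rw [tim_iff] at h ⊢
  simpa [sub_zero] using h

private lemma tim_const_mul {f : ℕ → Ω → ℝ} {g : Ω → ℝ} (c : ℝ)
    (h : TendstoInMeasure μ f atTop g) :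
    TendstoInMeasure μ (fun n ω => c * f n ω) atTop (fun ω => c * g ω) := by
  rcases eq_or_ne c 0 with rfl | hc
  · rw [tim_iff]
    intro ε hε δ hδ
    refine ⟨0, fun n _ => ?_⟩
    have : {ω : Ω | ε ≤ |0 * f n ω - 0 * g ω|} = ∅ := by
      ext ω; simp [hε.not_ge]
    rw [this, measure_empty]
    exact zero_le
  · rw [tim_iff] at h ⊢
    intro ε hε δ hδ
    obtain ⟨N, hN⟩ := h (ε / |c|) (by positivity) δ hδ
    refine ⟨N, fun n hn => le_trans (measure_mono ?_) (hN n hn)⟩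
    intro ω hω
    simp only [Set.mem_setOf_eq] at *
    rw [← mul_sub, abs_mul, mul_comm] at hω
    exact (div_le_iff₀ (abs_pos.mpr hc)).mpr hω

private lemma tim0_mul_right [IsFiniteMeasure μ] {f : ℕ → Ω → ℝ} {Y : Ω → ℝ}
    (hY : Measurable Y) (hf : TendstoInMeasure μ f atTop (fun _ => 0)) :
    TendstoInMeasure μ (fun n ω => f n ω * Y ω) atTop (fun _ => 0) := by
  rw [tim_iff] at hf ⊢
  intro ε hε δ hδ
  have hAnti : Antitone (fun M : ℕ => {ω | (M:ℝ) < |Y ω|}) := by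
    intro a b hab ω hω
    simp only [Set.mem_setOf_eq] at *
    exact lt_of_le_of_lt (by exact_mod_cast hab) hω
  have hmeasM : ∀ M : ℕ, NullMeasurableSet {ω | (M:ℝ) < |Y ω|} μ :=
    fun M => (measurableSet_lt measurable_const hY.abs).nullMeasurableSet
  have hint : (⋂ M : ℕ, {ω | (M:ℝ) < |Y ω|}) = ∅ := by
    ext ω
    simp only [Set.mem_iInter, Set.mem_setOf_eq, Set.mem_empty_iff_false, iff_false, not_forall,
      not_lt]
    obtain ⟨M, hM⟩ := exists_nat_gt |Y ω|
    exact ⟨M, hM.le⟩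
  have htend := tendsto_measure_iInter_atTop hmeasM hAnti ⟨0, measure_ne_top μ _⟩
  rw [hint, measure_empty] at htend
  obtain ⟨M0, hM0⟩ := ENNReal.tendsto_atTop_zero.mp htend (δ/2) (ENNReal.half_pos hδ.ne')
  have hMpos : (0:ℝ) < (M0:ℝ) + 1 := by positivity
  obtain ⟨N, hN⟩ := hf (ε / ((M0:ℝ) + 1)) (by positivity) (δ/2) (ENNReal.half_pos hδ.ne')
  refine ⟨N, fun n hn => ?_⟩
  have hsub : {ω | ε ≤ |f n ω * Y ω - 0|} ⊆
      {ω | ((M0+1 : ℕ):ℝ) < |Y ω|} ∪ {ω | ε / ((M0:ℝ)+1) ≤ |f n ω - 0|} := by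
    intro ω hω
    simp only [Set.mem_setOf_eq, sub_zero, Set.mem_union] at *
    by_contra hcon
    push_neg at hcon
    obtain ⟨h1, h2⟩ := hcon
    rw [abs_mul] at hω
    push_cast at h1
    have e1 : |f n ω| * |Y ω| ≤ |f n ω| * ((M0:ℝ)+1) :=
      mul_le_mul_of_nonneg_left h1 (abs_nonneg _)
    have e2 : |f n ω| * ((M0:ℝ)+1) < (ε/((M0:ℝ)+1)) * ((M0:ℝ)+1) :=
      mul_lt_mul_of_pos_right h2 hMpos
    rw [div_mul_cancel₀ _ (ne_of_gt hMpos)] at e2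
    linarith
  calc μ {ω | ε ≤ |f n ω * Y ω - 0|}
      ≤ μ ({ω | ((M0+1 : ℕ):ℝ) < |Y ω|} ∪ {ω | ε / ((M0:ℝ)+1) ≤ |f n ω - 0|}) :=
        measure_mono hsub
    _ ≤ μ {ω | ((M0+1 : ℕ):ℝ) < |Y ω|} + μ {ω | ε / ((M0:ℝ)+1) ≤ |f n ω - 0|} :=
        measure_union_le _ _
    _ ≤ δ/2 + δ/2 := add_le_add (hM0 (M0+1) (Nat.le_succ _)) (hN n hn)
    _ = δ := ENNReal.add_halves δ

private lemma tim0_sum {ι : Type*} (s : Finset ι) {f : ι → ℕ → Ω → ℝ}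
    (h : ∀ i ∈ s, TendstoInMeasure μ (f i) atTop (fun _ => 0)) :
    TendstoInMeasure μ (fun n ω => ∑ i ∈ s, f i n ω) atTop (fun _ => 0) := by
  classical
  induction s using Finset.induction_on with
  | empty => simpa using (tim_zero (μ := μ))
  | @insert a s ha ih =>
    have := tim0_add (h a (Finset.mem_insert_self a s))
      (ih fun i hi => h i (Finset.mem_insert_of_mem hi))
    refine this.congr (fun n => Eventually.of_forall fun ω => ?_) EventuallyEq.rfl
    simp [Finset.sum_insert ha]

private lemma integrable_of_bdd [IsFiniteMeasure μ] {m' : MeasurableSpace Ω} (hm' : m' ≤ H)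
    {f : Ω → ℝ} (hsm : StronglyMeasurable[m'] f) {C : ℝ} (hC : ∀ ω, |f ω| ≤ C) :
    Integrable f μ :=
  ⟨(hsm.mono hm').aestronglyMeasurable,
    HasFiniteIntegral.of_bounded (C := C)
      (ae_of_all _ fun ω => by simpa [Real.norm_eq_abs] using hC ω)⟩

private lemma meas_abs_ge_le [IsFiniteMeasure μ] {g : Ω → ℝ} (hg : Integrable g μ)
    {ε : ℝ} (hε : 0 < ε) :
    μ {ω | ε ≤ |g ω|} ≤ ENNReal.ofReal ((∫ ω, |g ω| ∂μ) / ε) := by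
  have h := mul_meas_ge_le_integral_of_nonneg (μ := μ) (f := fun ω => |g ω|)
    (ae_of_all _ fun ω => abs_nonneg _) hg.abs ε
  have hne : μ {ω | ε ≤ |g ω|} ≠ ∞ := measure_ne_top μ _
  rw [← ENNReal.ofReal_toReal hne]
  apply ENNReal.ofReal_le_ofReal
  rw [le_div_iff₀ hε]
  rw [measureReal_def] at h
  linarith [h]

private lemma abs_min_sub_min_le_abs' (a b c : ℝ) : |min c a - min c b| ≤ |a - b| := by
  have h := abs_max_sub_max_le_abs (-a) (-b) (-c)
  rw [max_neg_neg, max_neg_neg] at h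
  have h2 : |min b c - min a c| ≤ |b - a| := by
    calc |min b c - min a c| = |-(min a c) - -(min b c)| := by rw [neg_sub_neg, abs_sub_comm]
      _ ≤ |(-a) - (-b)| := h
      _ = |b - a| := by rw [neg_sub_neg]
  calc |min c a - min c b| = |min b c - min a c| := by
        rw [min_comm c a, min_comm c b, abs_sub_comm]
    _ ≤ |b - a| := h2
    _ = |a - b| := abs_sub_comm _ _

private lemma tim_condexp_simple [IsProbabilityMeasure μ]
    (G : ℕ → MeasurableSpace Ω) (hGle : ∀ m, G m ≤ H)
    (Flim : MeasurableSpace Ω) (hFlimle : Flim ≤ H)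
    (hconv : WeakConvSigma μ G Flim) (s : @SimpleFunc Ω Flim ℝ) :
    TendstoInMeasure μ (fun m => μ[⇑s | G m]) atTop ⇑s := by
  refine SimpleFunc.induction ?_ ?_ s
  · intro c B hB
    have eq1 : ⇑(SimpleFunc.piecewise B hB (SimpleFunc.const Ω c)
        (SimpleFunc.const Ω (0:ℝ))) = fun ω => c * Set.indicator B (fun _ => (1:ℝ)) ω := by
      funext ω
      by_cases hω : ω ∈ B <;> simp [SimpleFunc.piecewise_apply, hω, Set.indicator_apply]
    rw [eq1]
    have h1 := hconv B hB
    have h2 := tim_const_mul (μ := μ) c h1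
    refine TendstoInMeasure.congr (fun m => ?_) EventuallyEq.rfl h2
    filter_upwards [condExp_smul (μ := μ) (m := G m) c
      (Set.indicator B (fun _ => (1:ℝ)))] with ω hω
    have : (fun ω => c * Set.indicator B (fun _ => (1:ℝ)) ω)
        = c • Set.indicator B (fun _ => (1:ℝ)) := by
      funext x; simp [smul_eq_mul]
    rw [this, hω]
    simp [smul_eq_mul]
  · intro f g _ hf hg
    obtain ⟨Cf, hCf⟩ := f.exists_forall_norm_le
    obtain ⟨Cg, hCg⟩ := g.exists_forall_norm_le
    have hfsm : StronglyMeasurable[Flim] ⇑f := SimpleFunc.stronglyMeasurable f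
    have hgsm : StronglyMeasurable[Flim] ⇑g := SimpleFunc.stronglyMeasurable g
    have hintf : Integrable ⇑f μ := integrable_of_bdd hFlimle hfsm
      (fun ω => by simpa [Real.norm_eq_abs] using hCf ω)
    have hintg : Integrable ⇑g μ := integrable_of_bdd hFlimle hgsm
      (fun ω => by simpa [Real.norm_eq_abs] using hCg ω)
    have h3 := tim_add_s8 hf hg
    refine TendstoInMeasure.congr (fun m => ?_) (Eventually.of_forall fun ω => by simp) h3
    filter_upwards [condExp_add (μ := μ) (m := G m) hintf hintg] with ω hω
    have hco : ⇑(f + g) = ⇑f + ⇑g := by simp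
    rw [hco, hω]
    simp

private lemma tim_condexp [IsProbabilityMeasure μ]
    (G : ℕ → MeasurableSpace Ω) (hGle : ∀ m, G m ≤ H)
    (Flim : MeasurableSpace Ω) (hFlimle : Flim ≤ H)
    (hconv : WeakConvSigma μ G Flim) {h : Ω → ℝ} {C : ℝ} (hC0 : 0 ≤ C)
    (hC : ∀ ω, |h ω| ≤ C) (hsm : StronglyMeasurable[Flim] h) :
    TendstoInMeasure μ (fun m => μ[h | G m]) atTop h := by
  rw [tim_iff]
  intro ε hε δ hδ
  rcases eq_top_or_lt_top δ with rfl | hδtop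
  · exact ⟨0, fun n _ => le_top⟩
  have hδ3ne : δ/3 ≠ ∞ := (ENNReal.div_lt_top hδtop.ne (by norm_num)).ne
  have hδ3 : (0:ℝ≥0∞) < δ/3 := ENNReal.div_pos hδ.ne' (by norm_num)
  set η := (δ/3).toReal with hηdef
  have hηpos : 0 < η := ENNReal.toReal_pos hδ3.ne' hδ3ne
  -- simple approximation in L¹
  have hnorm : ∀ ω, ‖h ω‖ ≤ C := fun ω => by simpa [Real.norm_eq_abs] using hC ω
  have htendae : ∀ ω, Tendsto (fun kk => (hsm.approxBounded C kk) ω) atTop (𝓝 (h ω)) :=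
    fun ω => hsm.tendsto_approxBounded_of_norm_le (hnorm ω)
  have hsimple_sm : ∀ kk : ℕ, StronglyMeasurable[Flim] ⇑(hsm.approxBounded C kk) :=
    fun kk => SimpleFunc.stronglyMeasurable _
  have hImeas : ∀ kk : ℕ, AEStronglyMeasurable[H]
      (fun ω => |h ω - (hsm.approxBounded C kk).toFun ω|) μ :=
    fun kk => (((hsm.mono hFlimle).sub
      ((hsimple_sm kk).mono hFlimle)).norm).aestronglyMeasurable
  have htendI : Tendsto (fun kk => ∫ ω, |h ω - (hsm.approxBounded C kk) ω| ∂μ) atTop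
      (𝓝 (∫ _ω, (0:ℝ) ∂μ)) := by
    refine tendsto_integral_of_dominated_convergence (fun _ => 2*C) hImeas
      (integrable_const _) (fun kk => ae_of_all _ fun ω => ?_) (ae_of_all _ fun ω => ?_)
    · have h1 := hnorm ω
      have h2 := hsm.norm_approxBounded_le hC0 kk ω
      rw [Real.norm_eq_abs, abs_abs]
      rw [Real.norm_eq_abs] at h1 h2
      calc |h ω - (hsm.approxBounded C kk) ω| ≤ |h ω| + |(hsm.approxBounded C kk) ω| :=
            abs_sub _ _
        _ ≤ 2*C := by linarith
    · have h4 := ((htendae ω).const_sub (h ω)).abs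
      simpa using h4
  rw [integral_zero] at htendI
  have hpos : (0:ℝ) < (ε/3) * η := by positivity
  obtain ⟨k0, hk0⟩ := (htendI.eventually (gt_mem_nhds hpos)).exists
  set sf := hsm.approxBounded C k0 with hsfdef
  set I := ∫ ω, |h ω - sf ω| ∂μ with hIdef
  have hIpos : 0 ≤ I := integral_nonneg fun ω => abs_nonneg _
  -- integrability
  have hint_h : Integrable h μ := integrable_of_bdd hFlimle hsm hC
  have hint_s : Integrable ⇑sf μ := integrable_of_bdd hFlimle (hsimple_sm k0)
    (fun ω => by simpa [Real.norm_eq_abs] using hsm.norm_approxBounded_le hC0 k0 ω)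
  -- convergence for the simple function
  have h2 := tim_condexp_simple G hGle Flim hFlimle hconv sf
  rw [tim_iff] at h2
  obtain ⟨N, hN⟩ := h2 (ε/3) (by linarith) (δ/3) hδ3
  refine ⟨N, fun m hm => ?_⟩
  set χ := μ[h - ⇑sf | G m] with hχdef
  have hsub_ae := condExp_sub (μ := μ) (m := G m) hint_h hint_s
  set Nset := {ω | ¬ χ ω = (μ[h | G m]) ω - (μ[⇑sf | G m]) ω} with hNdef
  have hNnull : μ Nset = 0 := by
    have : ∀ᵐ ω ∂μ, χ ω = (μ[h | G m]) ω - (μ[⇑sf | G m]) ω := by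
      filter_upwards [hsub_ae] with ω hω
      simpa using hω
    exact ae_iff.mp this
  have hincl : {ω | ε ≤ |(μ[h | G m]) ω - h ω|} ⊆
      {ω | ε/3 ≤ |χ ω|} ∪ ({ω | ε/3 ≤ |(μ[⇑sf | G m]) ω - sf ω|}
        ∪ ({ω | ε/3 ≤ |h ω - sf ω|} ∪ Nset)) := by
    intro ω hω
    simp only [Set.mem_setOf_eq, Set.mem_union] at *
    by_cases hωN : χ ω = (μ[h | G m]) ω - (μ[⇑sf | G m]) ω
    swap
    · exact Or.inr (Or.inr (Or.inr hωN))
    by_contra hcon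
    push_neg at hcon
    obtain ⟨ha, hb, hcc, _⟩ := hcon
    have e : (μ[h | G m]) ω - h ω
        = χ ω + ((μ[⇑sf | G m]) ω - sf ω) + (sf ω - h ω) := by
      rw [hωN]; ring
    have habs : |(μ[h | G m]) ω - h ω| ≤
        |χ ω| + |(μ[⇑sf | G m]) ω - sf ω| + |sf ω - h ω| := by
      rw [e]
      exact (abs_add_le _ _).trans (add_le_add_left (abs_add_le _ _) _)
    rw [abs_sub_comm (sf ω) (h ω)] at habs
    linarith
  have hA1 : μ {ω | ε/3 ≤ |χ ω|} ≤ δ/3 := by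
    have hint_χ : Integrable χ μ := integrable_condExp
    have hmar := meas_abs_ge_le (μ := μ) hint_χ (show (0:ℝ) < ε/3 by linarith)
    have hIchi : ∫ ω, |χ ω| ∂μ ≤ I := by
      have h5 := integral_abs_condExp_le (μ := μ) (m := G m) (h - ⇑sf)
      simp only [Pi.sub_apply] at h5
      rw [hχdef, hIdef]
      exact h5
    refine hmar.trans ?_
    rw [← ENNReal.ofReal_toReal hδ3ne]
    apply ENNReal.ofReal_le_ofReal
    rw [div_le_iff₀ (show (0:ℝ) < ε/3 by linarith)]
    have hcomm : (ε/3) * η = η * (ε/3) := mul_comm _ _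
    linarith [hk0, hIchi, hcomm]
  have hA3 : μ {ω | ε/3 ≤ |h ω - sf ω|} ≤ δ/3 := by
    have hmar := meas_abs_ge_le (μ := μ) (hint_h.sub hint_s)
      (show (0:ℝ) < ε/3 by linarith)
    simp only [Pi.sub_apply] at hmar
    refine hmar.trans ?_
    rw [← ENNReal.ofReal_toReal hδ3ne]
    apply ENNReal.ofReal_le_ofReal
    rw [div_le_iff₀ (show (0:ℝ) < ε/3 by linarith)]
    have hcomm : (ε/3) * η = η * (ε/3) := mul_comm _ _
    linarith [hk0, hIdef, hcomm]
  have hA2 : μ {ω | ε/3 ≤ |(μ[⇑sf | G m]) ω - sf ω|} ≤ δ/3 := hN m hm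
  calc μ {ω | ε ≤ |(μ[h | G m]) ω - h ω|}
      ≤ μ ({ω | ε/3 ≤ |χ ω|} ∪ ({ω | ε/3 ≤ |(μ[⇑sf | G m]) ω - sf ω|}
        ∪ ({ω | ε/3 ≤ |h ω - sf ω|} ∪ Nset))) := measure_mono hincl
    _ ≤ μ {ω | ε/3 ≤ |χ ω|} + (μ {ω | ε/3 ≤ |(μ[⇑sf | G m]) ω - sf ω|}
        + (μ {ω | ε/3 ≤ |h ω - sf ω|} + μ Nset)) := by
          refine (measure_union_le _ _).trans ?_
          gcongr
          refine (measure_union_le _ _).trans ?_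
          gcongr
          exact measure_union_le _ _
    _ ≤ δ/3 + (δ/3 + (δ/3 + 0)) := by
          rw [hNnull]
          gcongr
    _ = δ := by
          rw [add_zero]
          have h3 : δ/3 + (δ/3 + δ/3) = 3 * (δ/3) := by ring
          rw [h3]
          exact ENNReal.mul_div_cancel' (by norm_num) (by norm_num)

end Helpers

/-- Let `Fm` be a sequence of filtrations and `F` a filtration with `Fm m t → F t`
weakly for every `t ∈ [0,T]`, and let `F̃ t = ⨆ m, Fm m t`.  If `X` is a càdlàg
process adapted to `F` which is a semimartingale with respect to `F̃`, then `X` is a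
semimartingale with respect to `F`. -/
theorem semimartingale_of_sup_semimartingale
    {Ω : Type*} {H : MeasurableSpace Ω} (μ : Measure Ω) [IsProbabilityMeasure μ]
    (T : ℝ) (hT : 0 < T)
    (Fm : ℕ → ℝ → MeasurableSpace Ω) (F : ℝ → MeasurableSpace Ω)
    (hFmmono : ∀ m, Monotone (Fm m)) (hFmono : Monotone F)
    (hFmle : ∀ m t, Fm m t ≤ H) (hFle : ∀ t, F t ≤ H)
    (hconv : ∀ t ∈ Set.Icc (0:ℝ) T, WeakConvSigma μ (fun m => Fm m t) (F t))
    (X : ℝ → Ω → ℝ)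
    (hXcadlag : ∀ ω, IsCadlagOn T (fun t => X t ω))
    (hXadapted : ∀ t, StronglyMeasurable[F t] (X t))
    (hXsemimg : BDSemimartingale μ T (fun t => ⨆ m, Fm m t) X) :
    BDSemimartingale μ T F X := by
  intro k t h ht_mono ht_mem h_meas h_bdd h_unif
  obtain ⟨C, hC⟩ := h_bdd
  set C' : ℝ := max C 0 with hC'def
  have hC'0 : 0 ≤ C' := le_max_right _ _
  have hC' : ∀ n i ω, |h n i ω| ≤ C' := fun n i ω => (hC n i ω).trans (le_max_left _ _)
  -- the uniform bound of the n-th process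
  set B : ℕ → ℝ := fun n => sSup (insert 0 {x | ∃ i ω, x = |h n i ω|}) with hBdef
  have hBbdd : ∀ n, BddAbove (insert 0 {x | ∃ i ω, x = |h n i ω|}) := by
    intro n
    refine ⟨C', fun x hx => ?_⟩
    rcases Set.mem_insert_iff.mp hx with rfl | ⟨i, ω, rfl⟩
    · exact hC'0
    · exact hC' n i ω
  have hB0 : ∀ n, 0 ≤ B n := fun n => le_csSup (hBbdd n) (Set.mem_insert _ _)
  have hBle : ∀ n i ω, |h n i ω| ≤ B n := fun n i ω =>
    le_csSup (hBbdd n) (Set.mem_insert_of_mem _ ⟨i, ω, rfl⟩)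
  have hBC : ∀ n, B n ≤ C' := by
    intro n
    refine csSup_le ⟨0, Set.mem_insert _ _⟩ fun x hx => ?_
    rcases Set.mem_insert_iff.mp hx with rfl | ⟨i, ω, rfl⟩
    · exact hC'0
    · exact hC' n i ω
  have hBsmall : ∀ ε > (0:ℝ), ∃ N, ∀ n ≥ N, B n ≤ ε := by
    intro ε hε
    obtain ⟨N, hN⟩ := h_unif ε hε
    refine ⟨N, fun n hn => csSup_le ⟨0, Set.mem_insert _ _⟩ fun x hx => ?_⟩
    rcases Set.mem_insert_iff.mp hx with rfl | ⟨i, ω, rfl⟩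
    · exact hε.le
    · exact hN n hn i ω
  -- clamping
  set cl : ℝ → ℝ → ℝ := fun b y => max (-b) (min b y) with hcldef
  have cl_abs : ∀ b y, 0 ≤ b → |cl b y| ≤ b := by
    intro b y hb
    rw [abs_le]
    constructor
    · exact le_max_left _ _
    · exact max_le (by linarith) (min_le_left _ _)
  have cl_eq : ∀ b y, |y| ≤ b → cl b y = y := by
    intro b y hy
    rw [abs_le] at hy
    simp only [hcldef]
    rw [min_eq_right hy.2, max_eq_right hy.1]
  have cl_lip : ∀ b y z, |cl b y - cl b z| ≤ |y - z| := by
    intro b y z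
    simp only [hcldef]
    rw [max_comm (-b) (min b y), max_comm (-b) (min b z)]
    exact (abs_max_sub_max_le_abs _ _ _).trans (abs_min_sub_min_le_abs' _ _ _)
  -- measurability of increments
  have hΔXmeas : ∀ n (i : Fin (k n)),
      Measurable (fun ω => X (t n i.succ) ω - X (t n i.castSucc) ω) := fun n i =>
    (((hXadapted _).mono (hFle _)).measurable).sub (((hXadapted _).mono (hFle _)).measurable)
  -- the approximating coefficients
  set g : (n : ℕ) → ℕ → Fin (k n) → Ω → ℝ :=
    fun n m i ω => cl (B n) ((μ[h n i | Fm m (t n i.castSucc)]) ω) with hgdef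
  -- Step A: for each fixed n, the difference of elementary integrals tends to 0 in measure
  have stepA : ∀ n : ℕ, TendstoInMeasure μ
      (fun m ω => ∑ i : Fin (k n),
        (h n i ω - g n m i ω) * (X (t n i.succ) ω - X (t n i.castSucc) ω))
      atTop (fun _ => 0) := by
    intro n
    refine tim0_sum Finset.univ fun i _ => ?_
    refine tim0_mul_right (hΔXmeas n i) ?_
    have hcond : TendstoInMeasure μ
        (fun m => μ[h n i | Fm m (t n i.castSucc)]) atTop (h n i) :=
      tim_condexp (fun m => Fm m (t n i.castSucc)) (fun m => hFmle m _)
        (F (t n i.castSucc)) (hFle _) (hconv _ (ht_mem n i.castSucc)) hC'0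
        (fun ω => hC' n i ω) (h_meas n i)
    have h0 := tim_sub_zero hcond
    refine tim0_of_le (fun m ω => ?_) h0
    calc |h n i ω - g n m i ω|
        = |cl (B n) (h n i ω) - cl (B n) ((μ[h n i | Fm m (t n i.castSucc)]) ω)| := by
          rw [cl_eq _ _ (hBle n i ω)]
      _ ≤ |h n i ω - (μ[h n i | Fm m (t n i.castSucc)]) ω| := cl_lip _ _ _
      _ = |(μ[h n i | Fm m (t n i.castSucc)]) ω - h n i ω| := abs_sub_comm _ _
  -- choose the approximating filtration index
  have hchoice : ∀ n : ℕ, ∃ M : ℕ,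
      μ {ω | 1/((n:ℝ)+1) ≤ |∑ i : Fin (k n),
        (h n i ω - g n M i ω) * (X (t n i.succ) ω - X (t n i.castSucc) ω)|}
        ≤ ENNReal.ofReal (1/((n:ℝ)+1)) := by
    intro n
    have hpos : (0:ℝ) < 1/((n:ℝ)+1) := by positivity
    obtain ⟨M, hM⟩ := (tim_iff.mp (stepA n)) (1/((n:ℝ)+1)) hpos
      (ENNReal.ofReal (1/((n:ℝ)+1))) (ENNReal.ofReal_pos.mpr hpos)
    refine ⟨M, ?_⟩
    simpa [sub_zero] using hM M le_rfl
  choose mc hmc using hchoice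
  -- the approximating coefficients are admissible for the supremum filtration
  have hmeas' : ∀ n (i : Fin (k n)),
      StronglyMeasurable[⨆ m, Fm m (t n i.castSucc)] (g n (mc n) i) := by
    intro n i
    have h1 : StronglyMeasurable[Fm (mc n) (t n i.castSucc)]
        (μ[h n i | Fm (mc n) (t n i.castSucc)]) := stronglyMeasurable_condExp
    have h2 := h1.mono (le_iSup (fun m => Fm m (t n i.castSucc)) (mc n))
    exact (measurable_const.max (measurable_const.min h2.measurable)).stronglyMeasurable
  have hbdd' : ∀ n (i : Fin (k n)) ω, |g n (mc n) i ω| ≤ C' :=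
    fun n i ω => (cl_abs _ _ (hB0 n)).trans (hBC n)
  have hunif' : ∀ ε > (0:ℝ), ∃ N, ∀ n ≥ N, ∀ (i : Fin (k n)) ω, |g n (mc n) i ω| ≤ ε := by
    intro ε hε
    obtain ⟨N, hN⟩ := hBsmall ε hε
    exact ⟨N, fun n hn i ω => (cl_abs _ _ (hB0 n)).trans (hN n hn)⟩
  have key := hXsemimg k t (fun n i => g n (mc n) i) ht_mono ht_mem hmeas' ⟨C', hbdd'⟩ hunif'
  -- conclusion
  rw [tim_iff] at key ⊢
  intro ε hε δ hδ
  obtain ⟨N1, hN1⟩ := key (ε/2) (by linarith) (δ/2) (ENNReal.half_pos hδ.ne')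
  obtain ⟨η, hηpos, hηle⟩ : ∃ η : ℝ, 0 < η ∧ ENNReal.ofReal η ≤ δ/2 := by
    rcases eq_or_ne (δ/2) ∞ with hh | hh
    · exact ⟨1, one_pos, by simp [hh]⟩
    · exact ⟨(δ/2).toReal, ENNReal.toReal_pos (ENNReal.half_pos hδ.ne').ne' hh,
        by rw [ENNReal.ofReal_toReal hh]⟩
  have hminpos : 0 < min (ε/2) η := lt_min (by linarith) hηpos
  obtain ⟨N2, hN2big⟩ := exists_nat_gt (1 / min (ε/2) η)
  have hN2 : ∀ n ≥ N2, 1/((n:ℝ)+1) ≤ min (ε/2) η := by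
    intro n hn
    have h1 : 1 / min (ε/2) η < (n:ℝ) + 1 := by
      refine hN2big.trans_le ?_
      have : (N2:ℝ) ≤ (n:ℝ) := by exact_mod_cast hn
      linarith
    have h2 := (div_lt_iff₀ hminpos).mp h1
    rw [div_le_iff₀ (by positivity)]
    nlinarith
  refine ⟨max N1 N2, fun n hn => ?_⟩
  have hn1 : n ≥ N1 := le_of_max_le_left hn
  have hn2 : n ≥ N2 := le_of_max_le_right hn
  have hsmall := hN2 n hn2
  have hsmallε : 1/((n:ℝ)+1) ≤ ε/2 := hsmall.trans (min_le_left _ _)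
  have hsmallη : 1/((n:ℝ)+1) ≤ η := hsmall.trans (min_le_right _ _)
  have hsub : {ω | ε ≤ |(∑ i : Fin (k n),
        h n i ω * (X (t n i.succ) ω - X (t n i.castSucc) ω)) - 0|} ⊆
      {ω | ε/2 ≤ |(∑ i : Fin (k n),
        g n (mc n) i ω * (X (t n i.succ) ω - X (t n i.castSucc) ω)) - 0|} ∪
      {ω | 1/((n:ℝ)+1) ≤ |∑ i : Fin (k n),
        (h n i ω - g n (mc n) i ω) * (X (t n i.succ) ω - X (t n i.castSucc) ω)|} := by
    intro ω hω
    simp only [Set.mem_setOf_eq, sub_zero, Set.mem_union] at *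
    by_contra hcon
    push_neg at hcon
    obtain ⟨h1, h2⟩ := hcon
    have hdiff : (∑ i : Fin (k n), h n i ω * (X (t n i.succ) ω - X (t n i.castSucc) ω))
        = (∑ i : Fin (k n), g n (mc n) i ω * (X (t n i.succ) ω - X (t n i.castSucc) ω))
          + ∑ i : Fin (k n),
            (h n i ω - g n (mc n) i ω) * (X (t n i.succ) ω - X (t n i.castSucc) ω) := by
      rw [← Finset.sum_add_distrib]
      exact Finset.sum_congr rfl fun i _ => by ring
    have habs : |∑ i : Fin (k n), h n i ω * (X (t n i.succ) ω - X (t n i.castSucc) ω)|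
        ≤ |∑ i : Fin (k n), g n (mc n) i ω * (X (t n i.succ) ω - X (t n i.castSucc) ω)|
          + |∑ i : Fin (k n),
            (h n i ω - g n (mc n) i ω) * (X (t n i.succ) ω - X (t n i.castSucc) ω)| := by
      rw [hdiff]; exact abs_add_le _ _
    linarith
  calc μ {ω | ε ≤ |(∑ i : Fin (k n),
        h n i ω * (X (t n i.succ) ω - X (t n i.castSucc) ω)) - 0|}
      ≤ μ ({ω | ε/2 ≤ |(∑ i : Fin (k n),
          g n (mc n) i ω * (X (t n i.succ) ω - X (t n i.castSucc) ω)) - 0|} ∪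
        {ω | 1/((n:ℝ)+1) ≤ |∑ i : Fin (k n),
          (h n i ω - g n (mc n) i ω) * (X (t n i.succ) ω - X (t n i.castSucc) ω)|}) :=
        measure_mono hsub
    _ ≤ μ {ω | ε/2 ≤ |(∑ i : Fin (k n),
          g n (mc n) i ω * (X (t n i.succ) ω - X (t n i.castSucc) ω)) - 0|} +
        μ {ω | 1/((n:ℝ)+1) ≤ |∑ i : Fin (k n),
          (h n i ω - g n (mc n) i ω) * (X (t n i.succ) ω - X (t n i.castSucc) ω)|} :=
        measure_union_le _ _
    _ ≤ δ/2 + δ/2 := by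
        refine add_le_add (hN1 n hn1) ?_
        refine (hmc n).trans ?_
        refine le_trans (ENNReal.ofReal_le_ofReal hsmallη) hηle
    _ = δ := ENNReal.add_halves δ
end

section
/- Let (τ_i)_{i≥1} be random times and (X_i)_{i≥1} random variables such that for all i, X_i and τ_i are independent, E|X_i| = μ for all i, Σ_{i≥1} P(τ_i ≤ T) < ∞, and P(τ_i = t) = 0 for all t and i. Then N_t = Σ_{i=1}^∞ X_i 1_{τ_i ≤ t} is integrable for each t ∈ [0,T], the partial-sum processes N^n_t = Σ_{i=1}^n X_i 1_{τ_i ≤ t} converge to N uniformly on [0,T] in probability, and N has no fixed times of discontinuity (P(ΔN_t ≠ 0) = 0 for all t). -/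
open MeasureTheory Filter ProbabilityTheory

/-- Let `τ i` be nonnegative random times and `X i` integrable random variables with
`X i` independent of `τ i`, common mean absolute value `μ₀`, `Σ P(τ i ≤ T) < ⊤` and
`P(τ i = t) = 0` for all `t`.  Then the marked point process
`N_t = Σ_{i} X i · 1_{τ i ≤ t}` is integrable for each `t ∈ [0,T]`, the partial sums
`Nⁿ` converge to `N` uniformly on `[0,T]` in probability, and `N` has no fixed times
of discontinuity. -/
theorem markedPointProcess_convergence
    {Ω : Type*} {H : MeasurableSpace Ω} (μ : Measure Ω) [IsProbabilityMeasure μ]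
    (T : ℝ) (hT : 0 < T)
    (τ : ℕ → Ω → ℝ) (X : ℕ → Ω → ℝ)
    (hτmeas : ∀ i, Measurable (τ i)) (hXmeas : ∀ i, Measurable (X i))
    (hτnonneg : ∀ i ω, 0 ≤ τ i ω)
    (hXint : ∀ i, Integrable (X i) μ)
    (hindep : ∀ i, IndepFun (X i) (τ i) μ)
    (μ₀ : ℝ) (hmean : ∀ i, ∫ ω, |X i ω| ∂μ = μ₀)
    (hsum : Summable (fun i => (μ {ω | τ i ω ≤ T}).toReal))
    (hnoatom : ∀ i (t : ℝ), μ {ω | τ i ω = t} = 0)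
    (N : ℝ → Ω → ℝ)
    (hN : ∀ t ω, N t ω = ∑' i, Set.indicator {ω' | τ i ω' ≤ t} (X i) ω) :
    (∀ t ∈ Set.Icc (0:ℝ) T, Integrable (N t) μ) ∧
    (∀ ε > (0:ℝ),
      Tendsto (fun n => μ {ω | ε ≤
          ⨆ t ∈ Set.Icc (0:ℝ) T,
            |(∑ i ∈ Finset.range n, Set.indicator {ω' | τ i ω' ≤ t} (X i) ω) - N t ω|})
        atTop (nhds 0)) ∧
    (∀ t ∈ Set.Icc (0:ℝ) T,
      μ {ω | N t ω ≠ ∑' i, Set.indicator {ω' | τ i ω' < t} (X i) ω} = 0) := by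
  have hsmeas : ∀ i (t : ℝ), MeasurableSet {ω | τ i ω ≤ t} :=
    fun i t => hτmeas i measurableSet_Iic
  have hfm : ∀ i (t : ℝ), Measurable (Set.indicator {ω' | τ i ω' ≤ t} (X i)) :=
    fun i t => (hXmeas i).indicator (hsmeas i t)
  -- total mass is finite
  have hC : (∑' i, μ {ω | τ i ω ≤ T}) ≠ ⊤ := by
    have h1 : ∀ i, μ {ω | τ i ω ≤ T} = ENNReal.ofReal ((μ {ω | τ i ω ≤ T}).toReal) :=
      fun i => (ENNReal.ofReal_toReal (measure_ne_top μ _)).symm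
    calc (∑' i, μ {ω | τ i ω ≤ T})
        = ∑' i, ENNReal.ofReal ((μ {ω | τ i ω ≤ T}).toReal) := tsum_congr h1
      _ = ENNReal.ofReal (∑' i, (μ {ω | τ i ω ≤ T}).toReal) :=
          (ENNReal.ofReal_tsum_of_nonneg (fun i => ENNReal.toReal_nonneg) hsum).symm
      _ ≠ ⊤ := ENNReal.ofReal_ne_top
  -- lintegral of each summand via independence
  have hlint : ∀ i (t : ℝ),
      (∫⁻ ω, (‖Set.indicator {ω' | τ i ω' ≤ t} (X i) ω‖₊ : ENNReal) ∂μ)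
        = ENNReal.ofReal μ₀ * μ {ω | τ i ω ≤ t} := by
    intro i t
    have hφ : Measurable fun x : ℝ => (‖x‖₊ : ENNReal) :=
      measurable_nnnorm.coe_nnreal_ennreal
    have hψ : Measurable ((Set.Iic t).indicator fun _ : ℝ => (1 : ENNReal)) :=
      measurable_const.indicator measurableSet_Iic
    have hind := (hindep i).comp hφ hψ
    have heq : ∀ ω, (‖Set.indicator {ω' | τ i ω' ≤ t} (X i) ω‖₊ : ENNReal)
        = (((fun x : ℝ => (‖x‖₊ : ENNReal)) ∘ X i) *
            (((Set.Iic t).indicator fun _ : ℝ => (1 : ENNReal)) ∘ τ i)) ω := by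
      intro ω
      by_cases h : τ i ω ≤ t
      · simp [Set.indicator_of_mem, h, Set.indicator_apply, Set.mem_Iic,
          Set.mem_setOf_eq, Function.comp]
      · simp [Set.indicator_apply, h, Set.mem_Iic, Set.mem_setOf_eq, Function.comp]
    calc (∫⁻ ω, (‖Set.indicator {ω' | τ i ω' ≤ t} (X i) ω‖₊ : ENNReal) ∂μ)
        = ∫⁻ ω, (((fun x : ℝ => (‖x‖₊ : ENNReal)) ∘ X i) *
            (((Set.Iic t).indicator fun _ : ℝ => (1 : ENNReal)) ∘ τ i)) ω ∂μ :=
          lintegral_congr heq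
      _ = (∫⁻ ω, (‖X i ω‖₊ : ENNReal) ∂μ) *
            ∫⁻ ω, (Set.Iic t).indicator (fun _ : ℝ => (1 : ENNReal)) (τ i ω) ∂μ :=
          lintegral_mul_eq_lintegral_mul_lintegral_of_indepFun
            (hφ.comp (hXmeas i)) (hψ.comp (hτmeas i)) hind
      _ = ENNReal.ofReal μ₀ * μ {ω | τ i ω ≤ t} := by
          congr 1
          · erw [← ofReal_integral_norm_eq_lintegral_enorm (hXint i)]
            congr 1
            simp_rw [Real.norm_eq_abs]
            exact hmean i
          · have h2 : ∀ ω, (Set.Iic t).indicator (fun _ : ℝ => (1 : ENNReal)) (τ i ω)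
                = Set.indicator {ω' | τ i ω' ≤ t} (1 : Ω → ENNReal) ω := by
              intro ω
              by_cases h : τ i ω ≤ t <;>
                simp [Set.indicator_apply, h, Set.mem_Iic, Set.mem_setOf_eq]
            rw [lintegral_congr h2, lintegral_indicator_one (hsmeas i t)]
  -- finite lintegral of sum of norms, for t ≤ T
  have hbound : ∀ t, t ≤ T →
      (∫⁻ ω, ∑' i, (‖Set.indicator {ω' | τ i ω' ≤ t} (X i) ω‖₊ : ENNReal) ∂μ) < ⊤ := by
    intro t ht
    rw [lintegral_tsum fun i => ((hfm i t).nnnorm.coe_nnreal_ennreal).aemeasurable]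
    calc (∑' i, ∫⁻ ω, (‖Set.indicator {ω' | τ i ω' ≤ t} (X i) ω‖₊ : ENNReal) ∂μ)
        = ∑' i, ENNReal.ofReal μ₀ * μ {ω | τ i ω ≤ t} := tsum_congr fun i => hlint i t
      _ ≤ ∑' i, ENNReal.ofReal μ₀ * μ {ω | τ i ω ≤ T} :=
          ENNReal.tsum_le_tsum fun i =>
            mul_le_mul_right (measure_mono fun ω hω => le_trans hω ht) _
      _ = ENNReal.ofReal μ₀ * ∑' i, μ {ω | τ i ω ≤ T} := ENNReal.tsum_mul_left
      _ < ⊤ := ENNReal.mul_lt_top ENNReal.ofReal_lt_top (lt_top_iff_ne_top.2 hC)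
  -- a.e. summability
  have hsummae : ∀ t, t ≤ T →
      ∀ᵐ ω ∂μ, Summable fun i => Set.indicator {ω' | τ i ω' ≤ t} (X i) ω := by
    intro t ht
    have h1 : ∀ᵐ ω ∂μ,
        (∑' i, (‖Set.indicator {ω' | τ i ω' ≤ t} (X i) ω‖₊ : ENNReal)) < ⊤ :=
      ae_lt_top (Measurable.ennreal_tsum fun i => (hfm i t).nnnorm.coe_nnreal_ennreal) (hbound t ht).ne
    filter_upwards [h1] with ω hω
    exact (ENNReal.tsum_coe_ne_top_iff_summable.1 hω.ne).of_nnnorm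
  -- Part 1: integrability
  have part1 : ∀ t ∈ Set.Icc (0:ℝ) T, Integrable (N t) μ := by
    intro t ht
    have hNt : N t = fun ω => ∑' i, Set.indicator {ω' | τ i ω' ≤ t} (X i) ω :=
      funext (hN t)
    constructor
    · rw [hNt]
      refine aestronglyMeasurable_of_tendsto_ae (f := fun n ω =>
          ∑ i ∈ Finset.range n, Set.indicator {ω' | τ i ω' ≤ t} (X i) ω) atTop
        (fun n => ((Finset.range n).measurable_sum
          (fun i _ => hfm i t)).aestronglyMeasurable) ?_
      filter_upwards [hsummae t ht.2] with ω hω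
      exact hω.hasSum.tendsto_sum_nat
    · rw [HasFiniteIntegral]
      have hpt : ∀ ω, (‖N t ω‖₊ : ENNReal)
          ≤ ∑' i, (‖Set.indicator {ω' | τ i ω' ≤ t} (X i) ω‖₊ : ENNReal) := by
        intro ω
        rw [hN t ω]
        by_cases h : Summable fun i => ‖Set.indicator {ω' | τ i ω' ≤ t} (X i) ω‖₊
        · calc (‖∑' i, Set.indicator {ω' | τ i ω' ≤ t} (X i) ω‖₊ : ENNReal)
              ≤ ((∑' i, ‖Set.indicator {ω' | τ i ω' ≤ t} (X i) ω‖₊ : NNReal) : ENNReal) :=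
                ENNReal.coe_le_coe.2 (nnnorm_tsum_le h)
            _ = ∑' i, (‖Set.indicator {ω' | τ i ω' ≤ t} (X i) ω‖₊ : ENNReal) :=
                ENNReal.coe_tsum h
        · have htop : (∑' i, (‖Set.indicator {ω' | τ i ω' ≤ t} (X i) ω‖₊ : ENNReal)) = ⊤ := by
            by_contra h'
            exact h (ENNReal.tsum_coe_ne_top_iff_summable.1 h')
          rw [htop]
          exact le_top
      exact lt_of_le_of_lt (lintegral_mono hpt) (hbound t ht.2)
  refine ⟨part1, ?_, ?_⟩
  -- Part 2: uniform convergence in probability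
  · intro ε hε
    have hsub : ∀ n, {ω | ε ≤
        ⨆ t ∈ Set.Icc (0:ℝ) T,
          |(∑ i ∈ Finset.range n, Set.indicator {ω' | τ i ω' ≤ t} (X i) ω) - N t ω|}
        ⊆ ⋃ k, {ω | τ (k + n) ω ≤ T} := by
      intro n ω hω
      by_contra hcon
      simp only [Set.mem_iUnion, Set.mem_setOf_eq, not_exists] at hcon
      have hle : (⨆ t ∈ Set.Icc (0:ℝ) T,
          |(∑ i ∈ Finset.range n, Set.indicator {ω' | τ i ω' ≤ t} (X i) ω) - N t ω|) ≤ 0 := by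
        refine Real.iSup_le (fun t => Real.iSup_le (fun htIcc => ?_) le_rfl) le_rfl
        have hNeq : N t ω = ∑ i ∈ Finset.range n,
            Set.indicator {ω' | τ i ω' ≤ t} (X i) ω := by
          rw [hN]
          refine tsum_eq_sum fun i hi => ?_
          have hi' : n ≤ i := le_of_not_gt (fun h => hi (Finset.mem_range.2 h))
          have h2 := hcon (i - n)
          rw [Nat.sub_add_cancel hi'] at h2
          have hnotmem : ω ∉ {ω' | τ i ω' ≤ t} := fun h => h2 (h.trans htIcc.2)
          exact Set.indicator_of_notMem hnotmem _
        rw [hNeq]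
        simp
      have := le_trans (Set.mem_setOf_eq ▸ hω) hle
      linarith
    have hbnd : ∀ n, μ {ω | ε ≤
        ⨆ t ∈ Set.Icc (0:ℝ) T,
          |(∑ i ∈ Finset.range n, Set.indicator {ω' | τ i ω' ≤ t} (X i) ω) - N t ω|}
        ≤ ∑' k, μ {ω | τ (k + n) ω ≤ T} :=
      fun n => (measure_mono (hsub n)).trans (measure_iUnion_le _)
    have htail : Tendsto (fun n => ∑' k, μ {ω | τ (k + n) ω ≤ T}) atTop (nhds 0) :=
      ENNReal.tendsto_sum_nat_add (fun i => μ {ω | τ i ω ≤ T}) hC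
    exact tendsto_of_tendsto_of_tendsto_of_le_of_le tendsto_const_nhds htail
      (fun n => zero_le) hbnd
  -- Part 3: no fixed times of discontinuity
  · intro t ht
    have hsub : {ω | N t ω ≠ ∑' i, Set.indicator {ω' | τ i ω' < t} (X i) ω}
        ⊆ ⋃ i, {ω | τ i ω = t} := by
      intro ω hω
      by_contra hcon
      simp only [Set.mem_iUnion, Set.mem_setOf_eq, not_exists] at hcon
      apply hω
      show N t ω = _
      rw [hN]
      refine tsum_congr fun i => ?_
      have h1 : τ i ω ≤ t ↔ τ i ω < t :=
        ⟨fun h => h.lt_of_ne (hcon i), le_of_lt⟩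
      simp only [Set.indicator_apply, Set.mem_setOf_eq, h1]
    exact measure_mono_null hsub (measure_iUnion_null fun i => hnoatom i t)
end
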